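/- arXiv:2401.00584 — 11 statements merged into one kernel-verified Lean document; each statement's English description precedes it below -/
import Mathlib

section
/- Let t be a nonnegative form on H with representing map Q (so t[φ,ψ] = ⟨Qφ,Qψ⟩ on dom t = dom Q). Then t is singular if and only if Q is a singular operator (i.e., ran Q is contained in the multivalued part of the closure of the graph of Q; equivalently, for every φ ∈ dom Q there exist φ_n ∈ dom Q with φ_n → φ and Qφ_n → 0). In this case m(t) = 0. -/
open Filter Topology
open scoped ComplexOrder

noncomputable section

variable {H K K' : Type*}

/-- Sesquilinear forms with domain `D`: linear in the first argument,
conjugate-linear in the second. -/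
abbrev Form [NormedAddCommGroup H] [InnerProductSpace ℂ H] (D : Submodule ℂ H) : Type _ :=
  ↥D →ₗ[ℂ] (↥D →ₛₗ[starRingEnd ℂ] ℂ)

section Defs

variable [NormedAddCommGroup H] [InnerProductSpace ℂ H]
  [NormedAddCommGroup K] [InnerProductSpace ℂ K]
  {D : Submodule ℂ H}

/-- `t[φ,φ] ≥ c‖φ‖²` on the domain (in the complex order, so diagonal values are real). -/
def BddBelowBy (t : Form D) (c : ℝ) : Prop :=
  ∀ φ : ↥D, (↑(c * ‖(φ : H)‖ ^ 2) : ℂ) ≤ t φ φ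

/-- The set of Rayleigh quotients of the form `t`; its infimum is the lower bound `m(t)`. -/
def rayleighSet (t : Form D) : Set ℝ :=
  {r : ℝ | ∃ φ : ↥D, (φ : H) ≠ 0 ∧ r = (t φ φ).re / ‖(φ : H)‖ ^ 2}

/-- `Q` is a representing map for the form `t - c` :
`t[φ,ψ] - c(φ,ψ) = (Qφ,Qψ)` (forms/inner products linear in the first entry). -/
def IsRepMap (t : Form D) (c : ℝ) (Q : ↥D →ₗ[ℂ] K) : Prop :=
  ∀ φ ψ : ↥D, t φ ψ - (c : ℂ) * (inner ℂ (ψ : H) (φ : H) : ℂ) = (inner ℂ (Q ψ) (Q φ) : ℂ)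

/-- The graph of a partially defined operator. -/
def graphOf (Q : ↥D →ₗ[ℂ] K) : Set (H × K) :=
  Set.range fun φ : ↥D => ((φ : H), Q φ)

/-- `Q` is a closed operator. -/
def OpClosed (Q : ↥D →ₗ[ℂ] K) : Prop := IsClosed (graphOf Q)

/-- `Q` is closable: the closure of its graph is again a graph. -/
def OpClosable (Q : ↥D →ₗ[ℂ] K) : Prop :=
  ∀ k : K, ((0 : H), k) ∈ closure (graphOf Q) → k = 0

/-- `Q` is singular: `ran Q ⊆ mul Q**`, equivalently every `(φ,0)` with `φ ∈ dom Q`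
belongs to the closure of the graph. -/
def OpSingular (Q : ↥D →ₗ[ℂ] K) : Prop :=
  ∀ φ : ↥D, ((φ : H), (0 : K)) ∈ closure (graphOf Q)

/-- `φ n →_t x` : convergence in `H` together with `t[φ_n - φ_m] → 0`. -/
def TConv (t : Form D) (φ : ℕ → ↥D) (x : H) : Prop :=
  Tendsto (fun n => (φ n : H)) atTop (nhds x) ∧
    Tendsto (fun p : ℕ × ℕ => t (φ p.1 - φ p.2) (φ p.1 - φ p.2)) (atTop ×ˢ atTop) (nhds 0)

/-- The form `t` is closable. -/
def FormClosable (t : Form D) : Prop :=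
  ∀ φ : ℕ → ↥D, TConv t φ 0 → Tendsto (fun n => t (φ n) (φ n)) atTop (nhds 0)

/-- The form `t` is closed. -/
def FormClosed (t : Form D) : Prop :=
  ∀ (φ : ℕ → ↥D) (x : H), TConv t φ x →
    ∃ hx : x ∈ D, Tendsto (fun n => t (φ n - ⟨x, hx⟩) (φ n - ⟨x, hx⟩)) atTop (nhds 0)

/-- The (nonnegative) form `t` is singular. -/
def FormSingular (t : Form D) : Prop :=
  ∀ ψ : ↥D, ∃ φ : ℕ → ↥D,
    Tendsto (fun n => (φ n : H)) atTop (nhds (ψ : H)) ∧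
      Tendsto (fun n => t (φ n) (φ n)) atTop (nhds 0)

end Defs

section Defs2

variable [NormedAddCommGroup H] [InnerProductSpace ℂ H]

/-- Order on forms: `t₁ ≤ t₂` iff `dom t₂ ⊆ dom t₁` and `t₁[φ] ≤ t₂[φ]` on `dom t₂`. -/
def FormLE {D₁ D₂ : Submodule ℂ H} (t₁ : Form D₁) (t₂ : Form D₂) : Prop :=
  ∃ h : D₂ ≤ D₁, ∀ φ : ↥D₂, t₁ ⟨(φ : H), h φ.2⟩ ⟨(φ : H), h φ.2⟩ ≤ t₂ φ φ

/-- `s` is an extension of the form `t` (`t ⊂ s`). -/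
def FormExtends {D₁ D₂ : Submodule ℂ H} (s : Form D₂) (t : Form D₁) : Prop :=
  ∃ h : D₁ ≤ D₂, ∀ φ ψ : ↥D₁, s ⟨(φ : H), h φ.2⟩ ⟨(ψ : H), h ψ.2⟩ = t φ ψ

/-- `r` is the regular part of `s` : a closable semibounded form below `s`
which dominates every closable semibounded form below `s`. -/
def IsRegularPart {D : Submodule ℂ H} (s r : Form D) : Prop :=
  FormClosable r ∧ (∃ c, BddBelowBy r c) ∧ FormLE r s ∧
    ∀ (Du : Submodule ℂ H) (u : Form Du), FormClosable u → (∃ cu, BddBelowBy u cu) →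
      FormLE u s → FormLE u r

end Defs2

section Rel

variable [NormedAddCommGroup H] [InnerProductSpace ℂ H]
  [NormedAddCommGroup K] [InnerProductSpace ℂ K] {D : Submodule ℂ H}

/-- A symmetric relation in `H`: `⟨φ',ψ⟩ = ⟨φ,ψ'⟩` for all members. -/
def IsSymmRel (R : Set (H × H)) : Prop :=
  ∀ p ∈ R, ∀ q ∈ R, (inner ℂ q.1 p.2 : ℂ) = (inner ℂ q.2 p.1 : ℂ)

/-- The adjoint of a linear relation in `H`. -/
def adjRelSet (R : Set (H × H)) : Set (H × H) :=
  {q | ∀ p ∈ R, (inner ℂ q.1 p.2 : ℂ) = (inner ℂ q.2 p.1 : ℂ)}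

/-- The relation `Q*Q + c` in `H`. -/
def StRel (Q : ↥D →ₗ[ℂ] K) (c : ℝ) : Set (H × H) :=
  {p | ∃ h : p.1 ∈ D, ∀ ψ : ↥D,
    (inner ℂ (Q ψ) (Q ⟨p.1, h⟩) : ℂ) = (inner ℂ (ψ : H) (p.2 - (c : ℂ) • p.1) : ℂ)}

/-- The relation `Q*Q** + c` in `H`, where `Q**` is the closure of the graph of `Q`. -/
def ARel (Q : ↥D →ₗ[ℂ] K) (c : ℝ) : Set (H × H) :=
  {p | ∃ g : K, (p.1, g) ∈ closure (graphOf Q) ∧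
    ∀ ψ : ↥D, (inner ℂ (Q ψ) g : ℂ) = (inner ℂ (ψ : H) (p.2 - (c : ℂ) • p.1) : ℂ)}

end Rel

section Aux

variable [NormedAddCommGroup H] [InnerProductSpace ℂ H]
  [NormedAddCommGroup K] [InnerProductSpace ℂ K] {D : Submodule ℂ H}

lemma diag_eq (t : Form D) (Q : ↥D →ₗ[ℂ] K) (hQ : IsRepMap t 0 Q) (φ : ↥D) :
    t φ φ = ((‖Q φ‖ ^ 2 : ℝ) : ℂ) := by
  have h := hQ φ φ
  simpa [inner_self_eq_norm_sq_to_K] using h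

lemma tendsto_diag_iff (t : Form D) (Q : ↥D →ₗ[ℂ] K) (hQ : IsRepMap t 0 Q)
    (φ : ℕ → ↥D) :
    Tendsto (fun n => t (φ n) (φ n)) atTop (nhds 0) ↔
      Tendsto (fun n => Q (φ n)) atTop (nhds 0) := by
  have key : (fun n => t (φ n) (φ n)) = fun n => ((‖Q (φ n)‖ ^ 2 : ℝ) : ℂ) :=
    funext fun n => diag_eq t Q hQ (φ n)
  rw [key]
  constructor
  · intro h
    have h1 : Tendsto (fun n => ‖Q (φ n)‖ ^ 2) atTop (nhds 0) := by
      have h2 := (Complex.continuous_re.tendsto 0).comp h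
      simpa [Function.comp_def, ← Complex.ofReal_pow] using h2
    have hsq : ∀ n, Real.sqrt (‖Q (φ n)‖ ^ 2) = ‖Q (φ n)‖ :=
      fun n => Real.sqrt_sq (norm_nonneg _)
    have h3 := (Real.continuous_sqrt.tendsto 0).comp h1
    have h4 : Tendsto (fun n => ‖Q (φ n)‖) atTop (nhds 0) := by
      simpa [Function.comp_def, hsq] using h3
    exact tendsto_zero_iff_norm_tendsto_zero.mpr h4
  · intro h
    have h2 : Tendsto (fun n => ‖Q (φ n)‖) atTop (nhds 0) :=
      tendsto_zero_iff_norm_tendsto_zero.mp h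
    have h1 : Tendsto (fun n => ‖Q (φ n)‖ ^ 2) atTop (nhds 0) := by
      simpa using h2.pow 2
    have h3 := (Complex.continuous_ofReal.tendsto 0).comp h1
    simpa [Function.comp_def] using h3

end Aux

/-- a nonnegative form `t` is singular iff its representing map `Q` is a
singular operator; in that case `m(t) = 0`. -/
theorem statement5 [NormedAddCommGroup H] [InnerProductSpace ℂ H]
    [NormedAddCommGroup K] [InnerProductSpace ℂ K]
    {D : Submodule ℂ H} (t : Form D)
    (hbdd : BddBelowBy t 0) (Q : ↥D →ₗ[ℂ] K) (hQ : IsRepMap t 0 Q) :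
    (FormSingular t ↔ OpSingular Q) ∧
      (FormSingular t → (∃ φ : ↥D, (φ : H) ≠ 0) → IsGLB (rayleighSet t) 0) := by
  constructor
  · constructor
    · intro hs ψ
      obtain ⟨φ, hφH, hφt⟩ := hs ψ
      have hQ0 : Tendsto (fun n => Q (φ n)) atTop (nhds 0) :=
        (tendsto_diag_iff t Q hQ φ).mp hφt
      have hpr : Tendsto (fun n => (((φ n : H)), Q (φ n))) atTop (nhds ((ψ : H), 0)) :=
        hφH.prodMk_nhds hQ0
      exact mem_closure_of_tendsto hpr (Filter.Eventually.of_forall fun n => ⟨φ n, rfl⟩)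
    · intro hs ψ
      obtain ⟨x, hx, hlim⟩ := mem_closure_iff_seq_limit.mp (hs ψ)
      choose φ hφ using hx
      have h1 : Tendsto (fun n => (x n).1) atTop (nhds (ψ : H)) :=
        (continuous_fst.tendsto _).comp hlim
      have h2 : Tendsto (fun n => (x n).2) atTop (nhds (0 : K)) :=
        (continuous_snd.tendsto _).comp hlim
      have e1 : ∀ n, (x n).1 = (φ n : H) := fun n => by rw [← hφ n]
      have e2 : ∀ n, (x n).2 = Q (φ n) := fun n => by rw [← hφ n]
      simp only [e1] at h1
      simp only [e2] at h2
      exact ⟨φ, h1, (tendsto_diag_iff t Q hQ φ).mpr h2⟩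
  · rintro hs ⟨φ₀, hφ₀⟩
    constructor
    · rintro r ⟨φ, hφne, rfl⟩
      have hre : (t φ φ).re = ‖Q φ‖ ^ 2 := by rw [diag_eq t Q hQ]; simp [← Complex.ofReal_pow]
      rw [hre]
      positivity
    · intro b hb
      obtain ⟨φ, hφH, hφt⟩ := hs φ₀
      have hnorm : Tendsto (fun n => ‖(φ n : H)‖) atTop (nhds ‖(φ₀ : H)‖) := hφH.norm
      have hpos : 0 < ‖(φ₀ : H)‖ := norm_pos_iff.mpr hφ₀
      have hev : ∀ᶠ n in atTop, (φ n : H) ≠ 0 := by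
        filter_upwards [hnorm.eventually (lt_mem_nhds hpos)] with n hn
        exact norm_pos_iff.mp hn
      have hnum : Tendsto (fun n => (t (φ n) (φ n)).re) atTop (nhds 0) := by
        have := (Complex.continuous_re.tendsto 0).comp hφt
        simpa [Function.comp_def] using this
      have hden : Tendsto (fun n => ‖(φ n : H)‖ ^ 2) atTop (nhds (‖(φ₀ : H)‖ ^ 2)) :=
        hnorm.pow 2
      have hdiv : Tendsto (fun n => (t (φ n) (φ n)).re / ‖(φ n : H)‖ ^ 2) atTop (nhds 0) := by
        have := hnum.div hden (by positivity)
        simpa only [zero_div, Pi.div_def] using this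
      refine ge_of_tendsto hdiv ?_
      filter_upwards [hev] with n hn
      exact hb ⟨φ n, hn, rfl⟩
end
end

section
/- If a nonnegative form t on H is both closable and singular, then t = 0 on its domain (i.e., t[φ,ψ] = 0 for all φ,ψ ∈ dom t). -/
open Filter Topology
open scoped ComplexOrder

noncomputable section

variable {H K K' : Type*}

section Aux6

variable [NormedAddCommGroup H] [InnerProductSpace ℂ H] {D : Submodule ℂ H}

lemma aux6_herm (t : Form D) (h0 : ∀ φ : ↥D, (t φ φ).im = 0) (φ ψ : ↥D) :
    t ψ φ = (starRingEnd ℂ) (t φ ψ) := by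
  have e1 : ∀ x y : ↥D, t (x + y) (x + y) = t x x + t x y + t y x + t y y := by
    intro x y; simp [map_add]; ring
  have h1 := h0 (φ + ψ)
  rw [e1] at h1
  simp only [Complex.add_im, h0 φ, h0 ψ] at h1
  have h2 := h0 (φ + Complex.I • ψ)
  rw [e1] at h2
  have ei1 : t φ (Complex.I • ψ) = - Complex.I * t φ ψ := by
    rw [map_smulₛₗ]; simp [Complex.conj_I]
  have ei2 : t (Complex.I • ψ) φ = Complex.I * t ψ φ := by
    rw [t.map_smul]; simp
  have ei3 : t (Complex.I • ψ) (Complex.I • ψ) = t ψ ψ := by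
    rw [t.map_smul, LinearMap.smul_apply, map_smulₛₗ]
    simp [Complex.conj_I, smul_eq_mul]
    rw [← mul_assoc]
    simp [Complex.I_mul_I]
  rw [ei1, ei2, ei3] at h2
  simp only [Complex.add_im, h0 φ, h0 ψ, Complex.mul_im, Complex.neg_im, Complex.neg_re,
    Complex.I_re, Complex.I_im] at h2
  apply Complex.ext <;> simp [Complex.conj_re, Complex.conj_im] <;> linarith

lemma aux6_cs (t : Form D) (him : ∀ φ : ↥D, (t φ φ).im = 0)
    (hre : ∀ φ : ↥D, 0 ≤ (t φ φ).re) (φ ψ : ↥D) :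
    ‖t φ ψ‖ ^ 2 ≤ (t φ φ).re * (t ψ ψ).re := by
  letI core : PreInnerProductSpace.Core ℂ ↥D :=
  { inner := fun x y => t y x
    conj_inner_symm := fun x y => (aux6_herm t him x y).symm
    re_inner_nonneg := fun x => by simpa using hre x
    add_left := fun x y z => by simp [map_add]
    smul_left := fun x y r => by simp [map_smulₛₗ, smul_eq_mul] }
  have h := @InnerProductSpace.Core.inner_mul_inner_self_le ℂ ↥D _ _ _ core ψ φ
  have hnorm : ‖t ψ φ‖ = ‖t φ ψ‖ := by
    rw [aux6_herm t him φ ψ]; simp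
  simp only [RCLike.re_to_complex] at h
  calc ‖t φ ψ‖ ^ 2 = ‖t φ ψ‖ * ‖t ψ φ‖ := by rw [hnorm, sq]
    _ ≤ (t ψ ψ).re * (t φ φ).re := h
    _ = (t φ φ).re * (t ψ ψ).re := mul_comm _ _

end Aux6

/-- a nonnegative form which is both closable and singular vanishes
identically on its domain. -/
theorem statement6 [NormedAddCommGroup H] [InnerProductSpace ℂ H]
    {D : Submodule ℂ H} (t : Form D)
    (hbdd : BddBelowBy t 0) (hcl : FormClosable t) (hsing : FormSingular t) :
    ∀ φ ψ : ↥D, t φ ψ = 0 := by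
  have hbdd' : ∀ φ : ↥D, (0 : ℂ) ≤ t φ φ := by
    intro φ; have := hbdd φ; simpa using this
  have him : ∀ φ : ↥D, (t φ φ).im = 0 := by
    intro φ; have := hbdd' φ; rw [Complex.le_def] at this; simpa using this.2.symm
  have hre : ∀ φ : ↥D, 0 ≤ (t φ φ).re := by
    intro φ; have := hbdd' φ; rw [Complex.le_def] at this; simpa using this.1
  have hdiag : ∀ φ : ↥D, t φ φ = 0 := by
    intro φ
    obtain ⟨f, hfH, hf0⟩ := hsing φ
    have hf0re : Tendsto (fun n => (t (f n) (f n)).re) atTop (𝓝 0) := by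
      have := (Complex.continuous_re.tendsto (0 : ℂ)).comp hf0
      simpa [Function.comp_def] using this
    -- t-convergence of (f n - φ) to 0
    have key : ∀ x y : ↥D, (t (x - y) (x - y)).re ≤ 2 * (t x x).re + 2 * (t y y).re := by
      intro x y
      have hpar : t (x - y) (x - y) + t (x + y) (x + y) = 2 * t x x + 2 * t y y := by
        simp [map_sub, map_add]; ring
      have h2 : (t (x - y) (x - y)).re + (t (x + y) (x + y)).re
          = 2 * (t x x).re + 2 * (t y y).re := by
        have := congrArg Complex.re hpar; simpa using this
      have := hre (x + y)
      linarith
    have hTC : TConv t (fun n => f n - φ) 0 := by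
      constructor
      · simpa using hfH.sub (tendsto_const_nhds (x := (φ : H)))
      · have hre2 : Tendsto
            (fun p : ℕ × ℕ => (t (f p.1 - f p.2) (f p.1 - f p.2)).re)
            (atTop ×ˢ atTop) (𝓝 0) := by
          have hg : Tendsto
              (fun p : ℕ × ℕ => 2 * (t (f p.1) (f p.1)).re + 2 * (t (f p.2) (f p.2)).re)
              (atTop ×ˢ atTop) (𝓝 0) := by
            have h1 := (hf0re.comp
              (tendsto_fst : Tendsto (Prod.fst : ℕ × ℕ → ℕ)
                ((atTop : Filter ℕ) ×ˢ (atTop : Filter ℕ)) atTop)).const_mul 2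
            have h2 := (hf0re.comp
              (tendsto_snd : Tendsto (Prod.snd : ℕ × ℕ → ℕ)
                ((atTop : Filter ℕ) ×ˢ (atTop : Filter ℕ)) atTop)).const_mul 2
            simpa using h1.add h2
          exact squeeze_zero (fun p => hre _) (fun p => key _ _) hg
        have hC : Tendsto
            (fun p : ℕ × ℕ => ((t (f p.1 - f p.2) (f p.1 - f p.2)).re : ℂ))
            (atTop ×ˢ atTop) (𝓝 0) := by
          have := (Complex.continuous_ofReal.tendsto (0 : ℝ)).comp hre2
          simp only [Function.comp_def, Complex.ofReal_zero] at this
          exact this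
        have heq : ∀ p : ℕ × ℕ,
            t ((fun n => f n - φ) p.1 - (fun n => f n - φ) p.2)
              ((fun n => f n - φ) p.1 - (fun n => f n - φ) p.2)
            = ((t (f p.1 - f p.2) (f p.1 - f p.2)).re : ℂ) := by
          intro p
          have hsub : (f p.1 - φ) - (f p.2 - φ) = f p.1 - f p.2 := by abel
          rw [show (fun n => f n - φ) p.1 - (fun n => f n - φ) p.2 = f p.1 - f p.2 from hsub]
          exact Complex.ext (Complex.ofReal_re _).symm
            (by rw [Complex.ofReal_im]; exact him _)
        rw [show (fun p : ℕ × ℕ =>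
            t ((fun n => f n - φ) p.1 - (fun n => f n - φ) p.2)
              ((fun n => f n - φ) p.1 - (fun n => f n - φ) p.2))
          = fun p : ℕ × ℕ => ((t (f p.1 - f p.2) (f p.1 - f p.2)).re : ℂ)
          from funext heq]
        exact hC
    have hlim2 : Tendsto (fun n => t (f n - φ) (f n - φ)) atTop (𝓝 0) := hcl _ hTC
    -- cross terms vanish
    have hcross : Tendsto (fun n => t (f n) φ) atTop (𝓝 0) := by
      apply squeeze_zero_norm
        (a := fun n => Real.sqrt ((t (f n) (f n)).re * (t φ φ).re))
      · intro n
        have hcs := aux6_cs t him hre (f n) φ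
        calc ‖t (f n) φ‖ = Real.sqrt (‖t (f n) φ‖ ^ 2) := (Real.sqrt_sq (norm_nonneg _)).symm
          _ ≤ Real.sqrt ((t (f n) (f n)).re * (t φ φ).re) := Real.sqrt_le_sqrt hcs
      · have hmc := hf0re.mul_const ((t φ φ).re)
        rw [zero_mul] at hmc
        have := (Real.continuous_sqrt.tendsto' 0 0 (by simp)).comp hmc
        simpa [Function.comp_def] using this
    have hcross2 : Tendsto (fun n => t φ (f n)) atTop (𝓝 0) := by
      have heq : (fun n => t φ (f n)) = fun n => (starRingEnd ℂ) (t (f n) φ) :=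
        funext fun n => aux6_herm t him (f n) φ
      rw [heq]
      have := (continuous_star.tendsto (0 : ℂ)).comp hcross
      simpa [Function.comp_def] using this
    -- combine
    have hexp : ∀ n, t (f n - φ) (f n - φ)
        = t (f n) (f n) - t (f n) φ - t φ (f n) + t φ φ := by
      intro n; simp [map_sub]; ring
    have hlim3 : Tendsto (fun n => t (f n - φ) (f n - φ)) atTop (𝓝 (t φ φ)) := by
      rw [show (fun n => t (f n - φ) (f n - φ))
        = fun n => t (f n) (f n) - t (f n) φ - t φ (f n) + t φ φ from funext hexp]
      have := ((hf0.sub hcross).sub hcross2).add (tendsto_const_nhds (x := t φ φ))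
      simpa using this
    exact (tendsto_nhds_unique hlim3 hlim2)
  intro φ ψ
  have hcs := aux6_cs t him hre φ ψ
  rw [hdiag φ] at hcs
  simp only [Complex.zero_re, zero_mul] at hcs
  have : ‖t φ ψ‖ = 0 := by nlinarith [norm_nonneg (t φ ψ), sq_nonneg (‖t φ ψ‖)]
  exact norm_eq_zero.mp this
end
end

section
/- Let t₁ and t₂ be semibounded forms on H with representing maps Q₁, Q₂ for t₁ − c, t₂ − c respectively (same constant c). Then t₁ ≤ t₂ (meaning dom t₂ ⊂ dom t₁ and t₁[φ] ≤ t₂[φ] for φ ∈ dom t₂) if and only if Q₁ is contractively dominated by Q₂, i.e., dom Q₂ ⊂ dom Q₁ and ‖Q₁φ‖ ≤ ‖Q₂φ‖ for all φ ∈ dom Q₂. -/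
open Filter Topology
open scoped ComplexOrder

noncomputable section

variable {H K K' : Type*}

/-- `t₁ ≤ t₂` iff `Q₁` is contractively dominated by `Q₂`
(representing maps for `tᵢ - c`, same constant `c`). -/
theorem statement7 [NormedAddCommGroup H] [InnerProductSpace ℂ H]
    [NormedAddCommGroup K] [InnerProductSpace ℂ K]
    [NormedAddCommGroup K'] [InnerProductSpace ℂ K']
    {D₁ D₂ : Submodule ℂ H} (t₁ : Form D₁) (t₂ : Form D₂) (c : ℝ)
    (Q₁ : ↥D₁ →ₗ[ℂ] K) (Q₂ : ↥D₂ →ₗ[ℂ] K')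
    (hQ₁ : IsRepMap t₁ c Q₁) (hQ₂ : IsRepMap t₂ c Q₂) :
    FormLE t₁ t₂ ↔
      ∃ h : D₂ ≤ D₁, ∀ φ : ↥D₂, ‖Q₁ ⟨(φ : H), h φ.2⟩‖ ≤ ‖Q₂ φ‖ := by
  have key : ∀ (h : D₂ ≤ D₁) (φ : ↥D₂),
      t₂ φ φ - t₁ ⟨(φ : H), h φ.2⟩ ⟨(φ : H), h φ.2⟩
        = ((‖Q₂ φ‖ ^ 2 - ‖Q₁ ⟨(φ : H), h φ.2⟩‖ ^ 2 : ℝ) : ℂ) := by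
    intro h φ
    have h1 := hQ₁ ⟨(φ : H), h φ.2⟩ ⟨(φ : H), h φ.2⟩
    have h2 := hQ₂ φ φ
    simp only [inner_self_eq_norm_sq_to_K] at h1 h2
    simp only [show ((RCLike.ofReal : ℝ → ℂ)) = Complex.ofReal from rfl] at h1 h2
    push_cast at h1 h2 ⊢
    linear_combination h2 - h1
  constructor
  · rintro ⟨h, hle⟩
    refine ⟨h, fun φ => ?_⟩
    have h3 := hle φ
    have h4 : (0 : ℂ) ≤ ((‖Q₂ φ‖ ^ 2 - ‖Q₁ ⟨(φ : H), h φ.2⟩‖ ^ 2 : ℝ) : ℂ) := by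
      rw [← key h φ]; exact sub_nonneg.mpr h3
    have h5 : (0 : ℝ) ≤ ‖Q₂ φ‖ ^ 2 - ‖Q₁ ⟨(φ : H), h φ.2⟩‖ ^ 2 := by
      exact_mod_cast h4
    have h6 : ‖Q₁ ⟨(φ : H), h φ.2⟩‖ ^ 2 ≤ ‖Q₂ φ‖ ^ 2 := by linarith
    nlinarith [norm_nonneg (Q₁ ⟨(φ : H), h φ.2⟩), norm_nonneg (Q₂ φ)]
  · rintro ⟨h, hle⟩
    refine ⟨h, fun φ => ?_⟩
    have h6 : ‖Q₁ ⟨(φ : H), h φ.2⟩‖ ^ 2 ≤ ‖Q₂ φ‖ ^ 2 :=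
      pow_le_pow_left₀ (norm_nonneg _) (hle φ) 2
    have h4 : (0 : ℂ) ≤ ((‖Q₂ φ‖ ^ 2 - ‖Q₁ ⟨(φ : H), h φ.2⟩‖ ^ 2 : ℝ) : ℂ) := by
      exact_mod_cast (by linarith : (0:ℝ) ≤ ‖Q₂ φ‖ ^ 2 - ‖Q₁ ⟨(φ : H), h φ.2⟩‖ ^ 2)
    have := key h φ
    rw [← sub_nonneg, this]
    exact h4
end
end

section
/- Every semibounded form t on H admits a decomposition t = t_reg + t_sing with dom t = dom t_reg = dom t_sing, where t_reg is a closable semibounded form with the same lower bound behavior and t_sing is a nonnegative singular form. Explicitly, if Q is a representing map for t − c and P₀ is the orthogonal projection onto mul Q** (the multivalued part of the closure of Q), then t_reg[φ,ψ] = c⟨φ,ψ⟩ + ⟨(I−P₀)Qφ, (I−P₀)Qψ⟩ is closable and t_sing[φ,ψ] = ⟨P₀Qφ, P₀Qψ⟩ is singular. -/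
open Filter Topology
open scoped ComplexOrder

noncomputable section

variable {H K K' : Type*}

/-- the Lebesgue decomposition `t = t_reg + t_sing` obtained from a
representing map `Q` and the orthogonal projection `P₀` onto `mul Q**`. -/
theorem statement8 [NormedAddCommGroup H] [InnerProductSpace ℂ H] [CompleteSpace H]
    [NormedAddCommGroup K] [InnerProductSpace ℂ K] [CompleteSpace K]
    {D : Submodule ℂ H} (t : Form D) (c : ℝ)
    (hbdd : BddBelowBy t c) (Q : ↥D →ₗ[ℂ] K) (hQ : IsRepMap t c Q)
    (P₀ : K →L[ℂ] K)
    (hPmem : ∀ k : K, ((0 : H), P₀ k) ∈ closure (graphOf Q))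
    (hPfix : ∀ k : K, ((0 : H), k) ∈ closure (graphOf Q) → P₀ k = k)
    (hPsa : ∀ k m : K, (inner ℂ (P₀ k) m : ℂ) = (inner ℂ k (P₀ m) : ℂ))
    (treg tsing : Form D)
    (hreg : ∀ φ ψ : ↥D, treg φ ψ = (c : ℂ) * (inner ℂ (ψ : H) (φ : H) : ℂ) +
      (inner ℂ (Q ψ - P₀ (Q ψ)) (Q φ - P₀ (Q φ)) : ℂ))
    (hsing : ∀ φ ψ : ↥D, tsing φ ψ = (inner ℂ (P₀ (Q ψ)) (P₀ (Q φ)) : ℂ)) :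
    (∀ φ ψ : ↥D, t φ ψ = treg φ ψ + tsing φ ψ) ∧
      FormClosable treg ∧ BddBelowBy treg c ∧
      FormSingular tsing ∧ BddBelowBy tsing 0 := by
  classical
  -- basic facts about `P₀`
  have hPP : ∀ k : K, P₀ (P₀ k) = P₀ k := fun k => hPfix _ (hPmem k)
  have hcross : ∀ x y : K, (inner ℂ (x - P₀ x) (P₀ y) : ℂ) = 0 := by
    intro x y
    rw [inner_sub_left, hPsa x (P₀ y), hPP, ← hPsa x y, sub_self]
  have hsplit : ∀ x y : K,
      (inner ℂ (x - P₀ x) (y - P₀ y) : ℂ) + (inner ℂ (P₀ x) (P₀ y) : ℂ) = inner ℂ x y := by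
    intro x y
    have h2 : (inner ℂ (P₀ x) y : ℂ) = inner ℂ (P₀ x) (P₀ y) := by
      rw [hPsa, ← hPP y, ← hPsa, hPP]
    rw [inner_sub_right, hcross x y, sub_zero, inner_sub_left, h2]
    ring
  -- the closure of the graph is closed under subtraction
  set L : ↥D →ₗ[ℂ] H × K := (D.subtype).prod Q with hL
  have hgr : graphOf Q = (LinearMap.range L : Set (H × K)) := by
    ext p
    simp [graphOf, hL, LinearMap.mem_range, Set.mem_range, LinearMap.prod_apply]
  have hsub : ∀ {p q : H × K}, p ∈ closure (graphOf Q) → q ∈ closure (graphOf Q) →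
      p - q ∈ closure (graphOf Q) := by
    intro p q hp hq
    have hset : closure (graphOf Q) = ((LinearMap.range L).topologicalClosure : Set (H × K)) := by
      rw [Submodule.topologicalClosure_coe, hgr]
    rw [hset] at hp hq ⊢
    exact Submodule.sub_mem _ hp hq
  refine ⟨?_, ?_, ?_, ?_, ?_⟩
  · -- decomposition
    intro φ ψ
    rw [hreg, hsing, add_assoc, hsplit (Q ψ) (Q φ)]
    linear_combination hQ φ ψ
  · -- closability of treg
    intro φ hφ
    obtain ⟨hφ0, hφc⟩ := hφ
    set u : ℕ → K := fun n => Q (φ n) - P₀ (Q (φ n)) with hu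
    have key : ∀ a b : ℕ, treg (φ a - φ b) (φ a - φ b) =
        (c : ℂ) * (inner ℂ ((φ a : H) - (φ b : H)) ((φ a : H) - (φ b : H)) : ℂ) +
          (inner ℂ (u a - u b) (u a - u b) : ℂ) := by
      intro a b
      have e : Q (φ a - φ b) - P₀ (Q (φ a - φ b)) = u a - u b := by
        simp only [map_sub, hu]; abel
      rw [hreg, e]
      norm_num
    have hδ : Tendsto (fun p : ℕ × ℕ => ((φ p.1 : H) - (φ p.2 : H)))
        (atTop ×ˢ atTop) (nhds 0) := by
      have h1 : Tendsto (fun p : ℕ × ℕ => (φ p.1 : H)) (atTop ×ˢ atTop) (nhds 0) :=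
        hφ0.comp tendsto_fst
      have h2 : Tendsto (fun p : ℕ × ℕ => (φ p.2 : H)) (atTop ×ˢ atTop) (nhds 0) :=
        hφ0.comp tendsto_snd
      simpa using h1.sub h2
    have hA : Tendsto (fun p : ℕ × ℕ =>
        (c : ℂ) * (inner ℂ ((φ p.1 : H) - (φ p.2 : H)) ((φ p.1 : H) - (φ p.2 : H)) : ℂ))
        (atTop ×ˢ atTop) (nhds 0) := by
      have := (hδ.inner (𝕜 := ℂ) hδ).const_mul (c : ℂ)
      simpa using this
    have hu2 : Tendsto (fun p : ℕ × ℕ => (inner ℂ (u p.1 - u p.2) (u p.1 - u p.2) : ℂ))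
        (atTop ×ˢ atTop) (nhds 0) := by
      have hφc' : Tendsto (fun p : ℕ × ℕ =>
          (c : ℂ) * (inner ℂ ((φ p.1 : H) - (φ p.2 : H)) ((φ p.1 : H) - (φ p.2 : H)) : ℂ) +
            (inner ℂ (u p.1 - u p.2) (u p.1 - u p.2) : ℂ)) (atTop ×ˢ atTop) (nhds 0) :=
        hφc.congr fun p => key p.1 p.2
      simpa using hφc'.sub hA
    have hnorm2 : Tendsto (fun p : ℕ × ℕ => ‖u p.1 - u p.2‖ ^ 2) (atTop ×ˢ atTop) (nhds 0) := by
      have := (Complex.continuous_re.tendsto 0).comp hu2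
      refine this.congr fun p => ?_
      simp [Function.comp, inner_self_eq_norm_sq_to_K, ← Complex.ofReal_pow]
    have hcauchy : CauchySeq u := by
      rw [cauchySeq_iff_tendsto_dist_atTop_0, ← Filter.prod_atTop_atTop_eq]
      have h := (Real.continuous_sqrt.tendsto 0).comp hnorm2
      rw [Real.sqrt_zero] at h
      refine h.congr fun p => ?_
      simp [Function.comp, Real.sqrt_sq (norm_nonneg _), dist_eq_norm]
    obtain ⟨k, hk⟩ := cauchySeq_tendsto_of_complete hcauchy
    have hmem : ∀ n, ((φ n : H), u n) ∈ closure (graphOf Q) := by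
      intro n
      have h1 : ((φ n : H), Q (φ n)) ∈ closure (graphOf Q) := subset_closure ⟨φ n, rfl⟩
      have h2 := hPmem (Q (φ n))
      have := hsub h1 h2
      simpa [Prod.mk_sub_mk, hu] using this
    have h0k : ((0 : H), k) ∈ closure (graphOf Q) :=
      isClosed_closure.mem_of_tendsto (hφ0.prodMk_nhds hk)
        (Filter.Eventually.of_forall hmem)
    have hPk : P₀ k = k := hPfix k h0k
    have hP0u : ∀ n, P₀ (u n) = 0 := by
      intro n; simp [hu, map_sub, hPP]
    have hPk0 : P₀ k = 0 := by
      have h1 : Tendsto (fun n => P₀ (u n)) atTop (nhds (P₀ k)) :=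
        (P₀.continuous.tendsto k).comp hk
      have h2 : Tendsto (fun _ : ℕ => (0 : K)) atTop (nhds (P₀ k)) := h1.congr hP0u
      exact tendsto_nhds_unique h2 tendsto_const_nhds
    have hk0 : k = 0 := by rw [← hPk, hPk0]
    subst hk0
    have hA' : Tendsto (fun n => (c : ℂ) * (inner ℂ ((φ n : H)) ((φ n : H)) : ℂ))
        atTop (nhds 0) := by
      have := (hφ0.inner (𝕜 := ℂ) hφ0).const_mul (c : ℂ)
      simpa using this
    have hB' : Tendsto (fun n => (inner ℂ (u n) (u n) : ℂ)) atTop (nhds 0) := by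
      simpa using hk.inner (𝕜 := ℂ) hk
    have := hA'.add hB'
    rw [add_zero] at this
    exact this.congr fun n => (hreg (φ n) (φ n)).symm
  · -- lower bound of treg
    intro φ
    rw [hreg]
    have h1 : (inner ℂ ((φ : H)) ((φ : H)) : ℂ) = ((‖(φ : H)‖ : ℂ)) ^ 2 :=
      inner_self_eq_norm_sq_to_K _
    have h2 : (inner ℂ (Q φ - P₀ (Q φ)) (Q φ - P₀ (Q φ)) : ℂ) =
        ((‖Q φ - P₀ (Q φ)‖ ^ 2 : ℝ) : ℂ) := by
      rw [inner_self_eq_norm_sq_to_K]; exact (Complex.ofReal_pow _ _).symm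
    rw [h1, h2]
    have h3 : ((c * ‖(φ : H)‖ ^ 2 : ℝ) : ℂ) = (c : ℂ) * ((‖(φ : H)‖ : ℂ)) ^ 2 := by push_cast; ring
    rw [h3]
    refine le_add_of_nonneg_right ?_
    exact Complex.zero_le_real.mpr (by positivity)
  · -- singularity of tsing
    intro ψ
    have hmem : ((ψ : H), Q ψ - P₀ (Q ψ)) ∈ closure (graphOf Q) := by
      have h1 : ((ψ : H), Q ψ) ∈ closure (graphOf Q) := subset_closure ⟨ψ, rfl⟩
      have := hsub h1 (hPmem (Q ψ))
      simpa [Prod.mk_sub_mk] using this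
    obtain ⟨x, hx, hxlim⟩ := mem_closure_iff_seq_limit.mp hmem
    choose φ hφ using hx
    have hfst : Tendsto (fun n => (φ n : H)) atTop (nhds (ψ : H)) := by
      have := (continuous_fst.tendsto _).comp hxlim
      exact this.congr fun n => congrArg Prod.fst (hφ n).symm
    have hsnd : Tendsto (fun n => Q (φ n)) atTop (nhds (Q ψ - P₀ (Q ψ))) := by
      have := (continuous_snd.tendsto _).comp hxlim
      exact this.congr fun n => congrArg Prod.snd (hφ n).symm
    refine ⟨φ, hfst, ?_⟩
    have hP : Tendsto (fun n => P₀ (Q (φ n))) atTop (nhds 0) := by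
      have := (P₀.continuous.tendsto _).comp hsnd
      simpa [map_sub, hPP, Function.comp_def] using this
    have := hP.inner (𝕜 := ℂ) hP
    simp only [inner_zero_left] at this
    exact this.congr fun n => (hsing (φ n) (φ n)).symm
  · -- nonnegativity of tsing
    intro φ
    rw [hsing]
    have h2 : (inner ℂ (P₀ (Q φ)) (P₀ (Q φ)) : ℂ) = ((‖P₀ (Q φ)‖ ^ 2 : ℝ) : ℂ) := by
      rw [inner_self_eq_norm_sq_to_K]; exact (Complex.ofReal_pow _ _).symm
    have h0 : (((0 : ℝ) * ‖(φ : H)‖ ^ 2 : ℝ) : ℂ) = 0 := by norm_num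
    rw [h2, h0]
    exact Complex.zero_le_real.mpr (by positivity)
end
end

section
/- Let t be a semibounded form on H with Lebesgue decomposition t = t_reg + t_sing. If u is any closable semibounded form on H with u ≤ t, then u ≤ t_reg. Consequently t_reg is the largest closable semibounded form below t. -/
open Filter Topology
open scoped ComplexOrder

noncomputable section

variable {H K K' : Type*}

section Helpers

variable {V : Type*} [AddCommGroup V] [Module ℂ V]

private lemma cs_aux (s : V → V → ℂ)
    (hadd : ∀ x y z, s (x + y) z = s x z + s y z)
    (hsmul : ∀ (a : ℂ) (x y : V), s (a • x) y = a * s x y)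
    (hherm : ∀ x y, s y x = (starRingEnd ℂ) (s x y))
    (hnonneg : ∀ x, 0 ≤ (s x x).re) (x y : V) :
    Complex.normSq (s x y) ≤ (s x x).re * (s y y).re := by
  have him : ∀ z : V, (s z z).im = 0 := by
    intro z
    have := hherm z z; rw [Complex.ext_iff] at this
    have h2 := this.2
    simp only [Complex.conj_im] at h2
    linarith
  have hF : ∀ (l : ℂ), (s (x + l • y) (x + l • y)).re
      = (s x x).re + 2 * (l * (starRingEnd ℂ) (s x y)).re + Complex.normSq l * (s y y).re := by
    intro l
    have h2 : s x (x + l•y) = (starRingEnd ℂ) (s x x) + (starRingEnd ℂ) l * (starRingEnd ℂ) (s y x) := by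
      rw [hherm (x + l•y) x, hadd, hsmul]; simp
    have h3 : s y (x + l•y) = (starRingEnd ℂ) (s x y) + (starRingEnd ℂ) l * (starRingEnd ℂ) (s y y) := by
      rw [hherm (x + l•y) y, hadd, hsmul]; simp
    have h1 : s (x + l • y) (x + l • y)
        = s x (x + l•y) + l * s y (x + l•y) := by rw [hadd, hsmul]
    rw [h1, h2, h3, hherm y x]
    have hxx := him x; have hyy := him y
    simp only [Complex.add_re, Complex.mul_re, Complex.conj_re, Complex.conj_im,
      Complex.normSq_apply, map_mul, Complex.add_im, Complex.mul_im, hxx, hyy]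
    ring
  set α := s x y with hα
  set A := (s x x).re
  set B := (s y y).re
  set N := Complex.normSq α with hN
  by_cases hy : B = 0
  · have key : ∀ t : ℝ, 0 ≤ A - 2 * t * N := by
      intro t
      have h0 := hnonneg (x + (-(t:ℂ) * α) • y)
      rw [hF (-(t:ℂ) * α)] at h0
      have e1 : ((-(t:ℂ) * α) * (starRingEnd ℂ) α).re = -t * N := by
        rw [mul_assoc, Complex.mul_conj]
        simp [hN]
      rw [e1, hy] at h0
      linarith
    have hN0 : 0 ≤ N := Complex.normSq_nonneg _
    rcases eq_or_lt_of_le hN0 with h | h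
    · simp [hy, ← h]
    · have h2 := key ((A + 1) / (2 * N))
      have heq : 2 * ((A + 1) / (2 * N)) * N = A + 1 := by field_simp
      rw [heq] at h2
      have hA := hnonneg x
      nlinarith
  · have hBpos : 0 < B := lt_of_le_of_ne (hnonneg y) (Ne.symm hy)
    have h0 := hnonneg (x + (-(α / (B:ℂ))) • y)
    rw [hF (-(α / (B:ℂ)))] at h0
    have e1 : ((-(α / (B:ℂ))) * (starRingEnd ℂ) α).re = -(N / B) := by
      rw [show (-(α / (B:ℂ))) * (starRingEnd ℂ) α = -((α * (starRingEnd ℂ) α) / (B:ℂ)) by ring,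
        Complex.mul_conj]
      simp [hN]
    have e2 : Complex.normSq (-(α / (B:ℂ))) = N / B ^ 2 := by
      simp [Complex.normSq_div, hN]
      ring
    rw [e1, e2] at h0
    have h3 : 0 ≤ A - N / B := by
      have h4 : N / B ^ 2 * B = N / B := by field_simp
      rw [h4] at h0; linarith
    have := (div_le_iff₀ hBpos).mp (by linarith : N / B ≤ A)
    linarith

private lemma herm_aux (s : V → V → ℂ)
    (hadd1 : ∀ x y z, s (x + y) z = s x z + s y z)
    (hsmul1 : ∀ (a : ℂ) x y, s (a • x) y = a * s x y)
    (hadd2 : ∀ x y z, s x (y + z) = s x y + s x z)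
    (hsmul2 : ∀ (a : ℂ) x y, s x (a • y) = (starRingEnd ℂ) a * s x y)
    (hdiag : ∀ x, (s x x).im = 0) :
    ∀ x y, s y x = (starRingEnd ℂ) (s x y) := by
  intro x y
  have e1 : s (x + y) (x + y) = s x x + (s x y + s y x) + s y y := by
    rw [hadd1, hadd2, hadd2]; ring
  have e2 : s (x + Complex.I • y) (x + Complex.I • y)
      = s x x + Complex.I * (s y x - s x y) + s y y := by
    rw [hadd1, hadd2, hadd2, hsmul1, hsmul2, hsmul2, hsmul1, Complex.conj_I]
    ring_nf
    rw [Complex.I_sq]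
    ring
  have i1 : (s x y).im + (s y x).im = 0 := by
    have := hdiag (x + y); rw [e1] at this
    simp only [Complex.add_im, hdiag x, hdiag y] at this
    linarith
  have i2 : (s y x).re - (s x y).re = 0 := by
    have := hdiag (x + Complex.I • y); rw [e2] at this
    simp only [Complex.add_im, Complex.mul_im, Complex.I_re, Complex.I_im,
      Complex.sub_re, Complex.sub_im, hdiag x, hdiag y] at this
    linarith
  rw [Complex.ext_iff]
  constructor
  · simp only [Complex.conj_re]; linarith
  · simp only [Complex.conj_im]; linarith

private lemma inner_self_complex {E : Type*} [NormedAddCommGroup E] [InnerProductSpace ℂ E]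
    (x : E) : (inner ℂ x x : ℂ) = ((‖x‖ ^ 2 : ℝ) : ℂ) := by
  apply Complex.ext
  · rw [Complex.ofReal_re]
    exact (norm_sq_eq_re_inner (𝕜 := ℂ) x).symm
  · rw [Complex.ofReal_im]
    exact inner_self_im (𝕜 := ℂ) x

private lemma tendsto_ofReal_re_of_im_zero {ι : Type*} {l : Filter ι} {f : ι → ℂ}
    (him : ∀ i, (f i).im = 0) {a : ℝ} (h : Tendsto (fun i => (f i).re) l (nhds a)) :
    Tendsto f l (nhds (a : ℂ)) := by
  have : f = fun i => (((f i).re : ℝ) : ℂ) := by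
    funext i; exact Complex.ext rfl (by simp [him i])
  rw [this]
  exact (Complex.continuous_ofReal.tendsto a).comp h

private lemma re_tendsto {ι : Type*} {l : Filter ι} {f : ι → ℂ} {a : ℂ}
    (h : Tendsto f l (nhds a)) : Tendsto (fun i => (f i).re) l (nhds a.re) :=
  (Complex.continuous_re.tendsto a).comp h

end Helpers

/-- the regular part `t_reg` of the Lebesgue decomposition dominates every
closable semibounded form below `t`; hence it is the largest such form. -/
theorem statement9 [NormedAddCommGroup H] [InnerProductSpace ℂ H] [CompleteSpace H]
    [NormedAddCommGroup K] [InnerProductSpace ℂ K] [CompleteSpace K]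
    {D : Submodule ℂ H} (t : Form D) (c : ℝ)
    (hbdd : BddBelowBy t c) (Q : ↥D →ₗ[ℂ] K) (hQ : IsRepMap t c Q)
    (P₀ : K →L[ℂ] K)
    (hPmem : ∀ k : K, ((0 : H), P₀ k) ∈ closure (graphOf Q))
    (hPfix : ∀ k : K, ((0 : H), k) ∈ closure (graphOf Q) → P₀ k = k)
    (hPsa : ∀ k m : K, (inner ℂ (P₀ k) m : ℂ) = (inner ℂ k (P₀ m) : ℂ))
    (treg : Form D)
    (hreg : ∀ φ ψ : ↥D, treg φ ψ = (c : ℂ) * (inner ℂ (ψ : H) (φ : H) : ℂ) +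
      (inner ℂ (Q ψ - P₀ (Q ψ)) (Q φ - P₀ (Q φ)) : ℂ)) :
    FormClosable treg ∧ FormLE treg t ∧
      ∀ (Du : Submodule ℂ H) (u : Form Du), FormClosable u → (∃ cu, BddBelowBy u cu) →
        FormLE u t → FormLE u treg := by
  classical
  -- basic projection facts
  have hP2 : ∀ k : K, P₀ (P₀ k) = P₀ k := fun k => hPfix _ (hPmem k)
  have hPR : ∀ k : K, P₀ (k - P₀ k) = 0 := by
    intro k; rw [map_sub, hP2, sub_self]
  have horth : ∀ k m : K, (inner ℂ (k - P₀ k) (P₀ m) : ℂ) = 0 := by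
    intro k m
    have h := hPsa (k - P₀ k) m
    rw [hPR] at h
    simpa using h.symm
  have hpyth : ∀ k : K, ‖k - P₀ k‖ ^ 2 ≤ ‖k‖ ^ 2 := by
    intro k
    have h0 : (inner ℂ (k - P₀ k) (P₀ k) : ℂ) = 0 := horth k k
    have he := norm_add_sq (𝕜 := ℂ) (k - P₀ k) (P₀ k)
    rw [sub_add_cancel, h0] at he
    simp only [map_zero, mul_zero, add_zero] at he
    nlinarith [sq_nonneg ‖P₀ k‖]
  -- diagonal formulas
  have ht_diag : ∀ χ : ↥D, t χ χ = ((c * ‖(χ : H)‖ ^ 2 + ‖Q χ‖ ^ 2 : ℝ) : ℂ) := by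
    intro χ
    have h := hQ χ χ
    rw [inner_self_complex, inner_self_complex] at h
    push_cast at h ⊢
    linear_combination h
  have htreg_diag : ∀ χ : ↥D,
      treg χ χ = ((c * ‖(χ : H)‖ ^ 2 + ‖Q χ - P₀ (Q χ)‖ ^ 2 : ℝ) : ℂ) := by
    intro χ
    rw [hreg χ χ, inner_self_complex, inner_self_complex]
    push_cast; ring
  -- the graph as a submodule
  set G : Submodule ℂ (H × K) := LinearMap.range ((D.subtype).prod Q) with hG
  have hgraph : graphOf Q = (G : Set (H × K)) := by
    ext p
    simp only [graphOf, Set.mem_range, hG, SetLike.mem_coe, LinearMap.mem_range,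
      LinearMap.prod_apply, Function.prod_apply, Submodule.coe_subtype]
  have hclosure : closure (graphOf Q) = (G.topologicalClosure : Set (H × K)) := by
    rw [hgraph]; exact (Submodule.topologicalClosure_coe G).symm
  -- Part A : treg is closable
  have hAclos : FormClosable treg := by
    rintro φ ⟨hφ0, hcau⟩
    set f : ℕ → K := fun n => Q (φ n) - P₀ (Q (φ n)) with hf
    have hre : Tendsto (fun p : ℕ × ℕ =>
        c * ‖(φ p.1 : H) - (φ p.2 : H)‖ ^ 2 + ‖f p.1 - f p.2‖ ^ 2)
        (atTop ×ˢ atTop) (nhds 0) := by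
      have key : ∀ p : ℕ × ℕ, (treg (φ p.1 - φ p.2) (φ p.1 - φ p.2)).re
          = c * ‖(φ p.1 : H) - (φ p.2 : H)‖ ^ 2 + ‖f p.1 - f p.2‖ ^ 2 := by
        intro p
        have e1 : Q (φ p.1 - φ p.2) - P₀ (Q (φ p.1 - φ p.2)) = f p.1 - f p.2 := by
          simp only [map_sub, hf]; abel
        have e2 : ((φ p.1 - φ p.2 : ↥D) : H) = (φ p.1 : H) - (φ p.2 : H) := rfl
        rw [htreg_diag, e1, e2, Complex.ofReal_re]
      have h := re_tendsto hcau
      rw [Complex.zero_re] at h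
      exact h.congr key
    have hHdiff : Tendsto (fun p : ℕ × ℕ => c * ‖(φ p.1 : H) - (φ p.2 : H)‖ ^ 2)
        (atTop ×ˢ atTop) (nhds 0) := by
      have h1 : Tendsto (fun p : ℕ × ℕ => (φ p.1 : H) - (φ p.2 : H))
          (atTop ×ˢ atTop) (nhds 0) := by
        have := (hφ0.comp tendsto_fst).sub (hφ0.comp tendsto_snd)
        simpa using this
      have := ((h1.norm).pow 2).const_mul c
      simpa using this
    have hfC : Tendsto (fun p : ℕ × ℕ => ‖f p.1 - f p.2‖ ^ 2) (atTop ×ˢ atTop) (nhds 0) := by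
      have := hre.sub hHdiff
      simpa using this
    have hfC' : Tendsto (fun p : ℕ × ℕ => ‖f p.1 - f p.2‖) (atTop ×ˢ atTop) (nhds 0) := by
      have hsq := (Real.continuous_sqrt.tendsto 0).comp hfC
      simp only [Function.comp_def, Real.sqrt_zero] at hsq
      refine hsq.congr fun p => ?_
      rw [Real.sqrt_sq (norm_nonneg _)]
    have hcauf : CauchySeq f := by
      rw [cauchySeq_iff_tendsto_dist_atTop_0, ← prod_atTop_atTop_eq]
      exact hfC'.congr fun p => (dist_eq_norm _ _).symm
    obtain ⟨k, hk⟩ := cauchySeq_tendsto_of_complete hcauf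
    have hmemn : ∀ n, (((φ n : H), f n) : H × K) ∈ G.topologicalClosure := by
      intro n
      have h1 : (((φ n : H), Q (φ n)) : H × K) ∈ G.topologicalClosure :=
        G.le_topologicalClosure ⟨φ n, rfl⟩
      have h2 : (((0 : H), P₀ (Q (φ n))) : H × K) ∈ G.topologicalClosure := by
        have := hPmem (Q (φ n)); rw [hclosure] at this; exact this
      have := Submodule.sub_mem _ h1 h2
      simpa [hf, Prod.ext_iff] using this
    have hk0 : (((0 : H), k) : H × K) ∈ closure (graphOf Q) := by
      rw [hclosure]
      have hcl : IsClosed (G.topologicalClosure : Set (H × K)) :=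
        G.isClosed_topologicalClosure
      exact hcl.mem_of_tendsto (hφ0.prodMk_nhds hk) (Filter.Eventually.of_forall hmemn)
    have hPk : P₀ k = k := hPfix k hk0
    have hkperp : ∀ n, (inner ℂ (f n) k : ℂ) = 0 := by
      intro n
      have := horth (Q (φ n)) k
      rwa [hPk] at this
    have hkz : k = 0 := by
      have hcont : Tendsto (fun n => (inner ℂ (f n) k : ℂ)) atTop (nhds (inner ℂ k k : ℂ)) :=
        hk.inner tendsto_const_nhds
      have hzero : Tendsto (fun _ : ℕ => (0 : ℂ)) atTop (nhds (inner ℂ k k : ℂ)) := by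
        refine hcont.congr fun n => ?_
        rw [hkperp n]
      have := tendsto_nhds_unique hzero tendsto_const_nhds
      rwa [inner_self_eq_zero] at this
    have him : ∀ n, (treg (φ n) (φ n)).im = 0 := by
      intro n; rw [htreg_diag]; simp [← Complex.ofReal_pow]
    have hre2 : Tendsto (fun n => (treg (φ n) (φ n)).re) atTop (nhds 0) := by
      have hkey : ∀ n, (treg (φ n) (φ n)).re = c * ‖(φ n : H)‖ ^ 2 + ‖f n‖ ^ 2 := by
        intro n; rw [htreg_diag]; simp [hf, ← Complex.ofReal_pow]
      rw [tendsto_congr hkey]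
      rw [hkz] at hk
      have h1 := ((hφ0.norm).pow 2).const_mul c
      have h2 := (hk.norm).pow 2
      simpa using h1.add h2
    have := tendsto_ofReal_re_of_im_zero him hre2
    simpa using this
  -- Part B : treg ≤ t
  have hBle : FormLE treg t := by
    refine ⟨le_rfl, fun φ => ?_⟩
    show treg φ φ ≤ t φ φ
    rw [ht_diag φ, htreg_diag φ]
    have h := hpyth (Q φ)
    exact_mod_cast (by linarith : c * ‖(φ : H)‖ ^ 2 + ‖Q φ - P₀ (Q φ)‖ ^ 2
      ≤ c * ‖(φ : H)‖ ^ 2 + ‖Q φ‖ ^ 2)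
  refine ⟨hAclos, hBle, ?_⟩
  -- Part C : maximality
  intro Du u hu_clos hcu' hule'
  obtain ⟨cu, hcu⟩ := hcu'
  obtain ⟨hDle, hule⟩ := hule'
  refine ⟨hDle, ?_⟩
  intro φ
  set emb : ↥D → ↥Du := fun ξ => ⟨(ξ : H), hDle ξ.2⟩ with hemb
  -- approximating sequence for P₀ (Q φ)
  have hmemP := hPmem (Q φ)
  rw [mem_closure_iff_seq_limit] at hmemP
  obtain ⟨g, hgmem, hglim⟩ := hmemP
  choose χ hχ using hgmem
  have hχH : Tendsto (fun n => ((χ n : H))) atTop (nhds 0) := by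
    have h := (continuous_fst.tendsto _).comp hglim
    simp only [Function.comp_def] at h
    refine h.congr fun n => ?_
    rw [← hχ n]
  have hχK : Tendsto (fun n => Q (χ n)) atTop (nhds (P₀ (Q φ))) := by
    have h := (continuous_snd.tendsto _).comp hglim
    simp only [Function.comp_def] at h
    refine h.congr fun n => ?_
    rw [← hχ n]
  set ψ : ℕ → ↥D := fun n => φ - χ n with hψ
  have hψH : Tendsto (fun n => ((ψ n : H))) atTop (nhds (φ : H)) := by
    have := (tendsto_const_nhds (x := (φ : H)) (f := atTop)).sub hχH
    simpa [hψ] using this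
  have hψK : Tendsto (fun n => Q (ψ n)) atTop (nhds (Q φ - P₀ (Q φ))) := by
    have := (tendsto_const_nhds (x := Q φ) (f := atTop)).sub hχK
    simpa [hψ, map_sub] using this
  -- t side limit
  have htlim : Tendsto (fun n => t (ψ n) (ψ n)) atTop (nhds (treg φ φ)) := by
    rw [htreg_diag φ]
    apply tendsto_ofReal_re_of_im_zero (fun n => by rw [ht_diag]; simp [← Complex.ofReal_pow])
    have hkey : ∀ n, (t (ψ n) (ψ n)).re = c * ‖(ψ n : H)‖ ^ 2 + ‖Q (ψ n)‖ ^ 2 := by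
      intro n; rw [ht_diag]; simp [← Complex.ofReal_pow]
    rw [tendsto_congr hkey]
    exact (((hψH.norm).pow 2).const_mul c).add ((hψK.norm).pow 2)
  -- u facts
  have hu_im : ∀ ρ : ↥Du, (u ρ ρ).im = 0 := by
    intro ρ
    have h := hcu ρ
    rw [Complex.le_def] at h
    simpa [← Complex.ofReal_pow] using h.2.symm
  have hu_re : ∀ ρ : ↥Du, cu * ‖(ρ : H)‖ ^ 2 ≤ (u ρ ρ).re := by
    intro ρ
    have h := hcu ρ
    rw [Complex.le_def] at h
    simpa [← Complex.ofReal_pow] using h.1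
  have huherm : ∀ x y : ↥Du, u y x = (starRingEnd ℂ) (u x y) :=
    herm_aux (fun x y => u x y)
      (by intro a b z; simp)
      (by intro a x y; simp)
      (by intro x y z; simp)
      (by intro a x y; simp [LinearMap.map_smulₛₗ, smul_eq_mul])
      hu_im
  -- t diagonal differences of χ tend to 0
  have htχ : Tendsto (fun p : ℕ × ℕ => (t (χ p.1 - χ p.2) (χ p.1 - χ p.2)).re)
      (atTop ×ˢ atTop) (nhds 0) := by
    have hkey : ∀ p : ℕ × ℕ, (t (χ p.1 - χ p.2) (χ p.1 - χ p.2)).re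
        = c * ‖(χ p.1 : H) - (χ p.2 : H)‖ ^ 2 + ‖Q (χ p.1) - Q (χ p.2)‖ ^ 2 := by
      intro p; rw [ht_diag]; simp [map_sub, ← Complex.ofReal_pow]
    rw [tendsto_congr hkey]
    have h1 : Tendsto (fun p : ℕ × ℕ => c * ‖(χ p.1 : H) - (χ p.2 : H)‖ ^ 2)
        (atTop ×ˢ atTop) (nhds 0) := by
      have hd : Tendsto (fun p : ℕ × ℕ => (χ p.1 : H) - (χ p.2 : H))
          (atTop ×ˢ atTop) (nhds 0) := by
        have := (hχH.comp tendsto_fst).sub (hχH.comp tendsto_snd)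
        simpa using this
      have := ((hd.norm).pow 2).const_mul c
      simpa using this
    have h2 : Tendsto (fun p : ℕ × ℕ => ‖Q (χ p.1) - Q (χ p.2)‖ ^ 2)
        (atTop ×ˢ atTop) (nhds 0) := by
      have hd : Tendsto (fun p : ℕ × ℕ => Q (χ p.1) - Q (χ p.2))
          (atTop ×ˢ atTop) (nhds 0) := by
        have := (hχK.comp tendsto_fst).sub (hχK.comp tendsto_snd)
        simpa using this
      simpa using (hd.norm).pow 2
    simpa using h1.add h2
  -- u diagonal differences of χ tend to 0 (squeeze)
  have huχre : Tendsto (fun p : ℕ × ℕ =>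
      (u (emb (χ p.1) - emb (χ p.2)) (emb (χ p.1) - emb (χ p.2))).re)
      (atTop ×ˢ atTop) (nhds 0) := by
    have hlow : Tendsto (fun p : ℕ × ℕ => cu * ‖(χ p.1 : H) - (χ p.2 : H)‖ ^ 2)
        (atTop ×ˢ atTop) (nhds 0) := by
      have hd : Tendsto (fun p : ℕ × ℕ => (χ p.1 : H) - (χ p.2 : H))
          (atTop ×ˢ atTop) (nhds 0) := by
        have := (hχH.comp tendsto_fst).sub (hχH.comp tendsto_snd)
        simpa using this
      have := ((hd.norm).pow 2).const_mul cu
      simpa using this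
    refine tendsto_of_tendsto_of_tendsto_of_le_of_le hlow htχ ?_ ?_
    · intro p
      have h := hu_re (emb (χ p.1) - emb (χ p.2))
      simpa [hemb] using h
    · intro p
      have h := hule (χ p.1 - χ p.2)
      rw [Complex.le_def] at h
      exact h.1
  have huχdiff : Tendsto (fun p : ℕ × ℕ =>
      u (emb (χ p.1) - emb (χ p.2)) (emb (χ p.1) - emb (χ p.2)))
      (atTop ×ˢ atTop) (nhds 0) := by
    rw [show (0 : ℂ) = ((0 : ℝ) : ℂ) by norm_num]
    exact tendsto_ofReal_re_of_im_zero (fun p => hu_im _) huχre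
  have hu0 : Tendsto (fun n => u (emb (χ n)) (emb (χ n))) atTop (nhds 0) := by
    apply hu_clos (fun n => emb (χ n))
    exact ⟨hχH, huχdiff⟩
  -- Cauchy–Schwarz for the shifted form
  set sf : ↥Du → ↥Du → ℂ :=
    fun x y => u x y - (cu : ℂ) * (inner ℂ (y : H) (x : H) : ℂ) with hsf
  have hs_add : ∀ x y z, sf (x + y) z = sf x z + sf y z := by
    intro x y z
    simp only [hsf, map_add, LinearMap.add_apply, Submodule.coe_add, inner_add_right]
    ring
  have hs_smul : ∀ (a : ℂ) (x y : ↥Du), sf (a • x) y = a * sf x y := by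
    intro a x y
    simp only [hsf, map_smul, LinearMap.smul_apply, smul_eq_mul, Submodule.coe_smul,
      inner_smul_right]
    ring
  have hs_herm : ∀ x y, sf y x = (starRingEnd ℂ) (sf x y) := by
    intro x y
    simp only [hsf]
    rw [huherm x y, map_sub, map_mul, Complex.conj_ofReal, inner_conj_symm]
  have hs_nonneg : ∀ x, 0 ≤ (sf x x).re := by
    intro x
    have h := hu_re x
    simp only [hsf]
    rw [inner_self_complex]
    simp only [Complex.sub_re, Complex.mul_re, Complex.ofReal_re, Complex.ofReal_im,
      mul_zero, zero_mul, sub_zero]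
    nlinarith [h]
  have hsdiag : Tendsto (fun n => (sf (emb (χ n)) (emb (χ n))).re) atTop (nhds 0) := by
    have hkey : ∀ n, (sf (emb (χ n)) (emb (χ n))).re
        = (u (emb (χ n)) (emb (χ n))).re - cu * ‖(χ n : H)‖ ^ 2 := by
      intro n
      simp only [hsf]
      rw [inner_self_complex]
      simp only [Complex.sub_re, Complex.mul_re, Complex.ofReal_re, Complex.ofReal_im,
        mul_zero, zero_mul, sub_zero]
      rfl
    rw [tendsto_congr hkey]
    have h1 := re_tendsto hu0
    rw [Complex.zero_re] at h1
    have h2 := ((hχH.norm).pow 2).const_mul cu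
    simpa using h1.sub h2
  have hstend : Tendsto (fun n => sf (emb φ) (emb (χ n))) atTop (nhds 0) := by
    have hCS : ∀ n, Complex.normSq (sf (emb φ) (emb (χ n)))
        ≤ (sf (emb φ) (emb φ)).re * (sf (emb (χ n)) (emb (χ n))).re := fun n =>
      cs_aux sf hs_add hs_smul hs_herm hs_nonneg _ _
    have hnsq : Tendsto (fun n => Complex.normSq (sf (emb φ) (emb (χ n)))) atTop (nhds 0) := by
      refine squeeze_zero (fun n => Complex.normSq_nonneg _) hCS ?_
      have := hsdiag.const_mul ((sf (emb φ) (emb φ)).re)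
      simpa using this
    rw [tendsto_zero_iff_norm_tendsto_zero]
    have hsq := (Real.continuous_sqrt.tendsto 0).comp hnsq
    simp only [Function.comp_def, Real.sqrt_zero] at hsq
    refine hsq.congr fun n => ?_
    rw [Complex.norm_def]
  have hcross : Tendsto (fun n => u (emb φ) (emb (χ n))) atTop (nhds 0) := by
    have hinner : Tendsto (fun n => (cu : ℂ) * (inner ℂ ((emb (χ n) : ↥Du) : H) ((emb φ : ↥Du) : H) : ℂ))
        atTop (nhds 0) := by
      have h : Tendsto (fun n => (inner ℂ ((χ n : H)) ((φ : H)) : ℂ)) atTop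
          (nhds (inner ℂ (0 : H) ((φ : H)) : ℂ)) := hχH.inner tendsto_const_nhds
      simp only [inner_zero_left] at h
      have := h.const_mul ((cu : ℂ))
      simpa [hemb] using this
    have := hstend.add hinner
    simpa [hsf] using this
  have hcross2 : Tendsto (fun n => u (emb (χ n)) (emb φ)) atTop (nhds 0) := by
    have hkey : ∀ n, u (emb (χ n)) (emb φ) = (starRingEnd ℂ) (u (emb φ) (emb (χ n))) :=
      fun n => huherm _ _
    rw [tendsto_congr hkey]
    have := (Complex.continuous_conj.tendsto 0).comp hcross
    simpa [Function.comp_def] using this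
  -- limit of u on ψ
  have hulim : Tendsto (fun n => u (emb (ψ n)) (emb (ψ n))) atTop
      (nhds (u (emb φ) (emb φ))) := by
    have hexp : ∀ n, u (emb (ψ n)) (emb (ψ n))
        = u (emb φ) (emb φ) - u (emb φ) (emb (χ n)) - u (emb (χ n)) (emb φ)
          + u (emb (χ n)) (emb (χ n)) := by
      intro n
      have he : emb (ψ n) = emb φ - emb (χ n) := rfl
      rw [he]
      simp only [map_sub, LinearMap.sub_apply]
      ring
    rw [tendsto_congr hexp]
    have := ((tendsto_const_nhds (x := u (emb φ) (emb φ)) (f := atTop)).sub hcross).sub hcross2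
    simpa using this.add hu0
  -- conclusion
  have hle_n : ∀ n, (u (emb (ψ n)) (emb (ψ n))).re ≤ (t (ψ n) (ψ n)).re := by
    intro n
    have h := hule (ψ n)
    rw [Complex.le_def] at h
    exact h.1
  have hre_le : (u (emb φ) (emb φ)).re ≤ (treg φ φ).re :=
    le_of_tendsto_of_tendsto' (re_tendsto hulim) (re_tendsto htlim) hle_n
  show u (emb φ) (emb φ) ≤ treg φ φ
  rw [Complex.le_def]
  refine ⟨hre_le, ?_⟩
  rw [hu_im (emb φ), htreg_diag φ]
  simp [← Complex.ofReal_pow]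
end
end

section
/- Let t be a semibounded closable form on H, and let b be a symmetric form with dom t ⊂ dom b and |b[φ]| ≤ α‖φ‖² for all φ ∈ dom t and some α ≥ 0. Then (t + b)_reg = t_reg + b and (t + b)_sing = t_sing, where subscripts reg, sing denote the components in the Lebesgue decomposition. -/
open Filter Topology
open scoped ComplexOrder

noncomputable section

variable {H K K' : Type*}

section Aux10

variable [NormedAddCommGroup H] [InnerProductSpace ℂ H]

/-- Restriction of a form to a smaller domain. -/
def restrictForm {D₁ D₂ : Submodule ℂ H} (h : D₁ ≤ D₂) (u : Form D₂) : Form D₁ where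
  toFun φ :=
    { toFun := fun ψ => u (Submodule.inclusion h φ) (Submodule.inclusion h ψ)
      map_add' := fun ψ₁ ψ₂ => by simp
      map_smul' := fun c ψ => by simp }
  map_add' := fun φ₁ φ₂ => by ext ψ; simp
  map_smul' := fun c φ => by ext ψ; simp

lemma restrictForm_apply {D₁ D₂ : Submodule ℂ H} (h : D₁ ≤ D₂) (u : Form D₂)
    (φ ψ : ↥D₁) : restrictForm h u φ ψ = u ⟨(φ : H), h φ.2⟩ ⟨(ψ : H), h ψ.2⟩ := rfl

/-- A sesquilinear form vanishing on the diagonal vanishes identically (polarization). -/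
lemma polarization_zero {D : Submodule ℂ H} (s : Form D) (hd : ∀ φ : ↥D, s φ φ = 0) :
    ∀ φ ψ : ↥D, s φ ψ = 0 := by
  intro φ ψ
  have k1 : ∀ χ ξ : ↥D, s χ (Complex.I • ξ) = - Complex.I * s χ ξ := by
    intro χ ξ
    rw [LinearMap.map_smulₛₗ, smul_eq_mul, Complex.conj_I, neg_mul]
  have k2 : ∀ χ ξ : ↥D, s (Complex.I • χ) ξ = Complex.I * s χ ξ := by
    intro χ ξ
    rw [map_smul, LinearMap.smul_apply, smul_eq_mul]
  have h1 := hd (φ + ψ)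
  have h2 := hd (φ + Complex.I • ψ)
  simp only [map_add, LinearMap.add_apply] at h1 h2
  rw [hd φ, hd ψ] at h1
  rw [hd φ, k1, k1, k2, k2, hd ψ, mul_zero] at h2
  linear_combination (h1 + Complex.I * h2) / 2 + ((s φ ψ - s ψ φ) / 2) * Complex.I_sq

/-- Squeeze lemma: a complex sequence bounded by `α * g ^ 2` with `g → 0` tends to `0`. -/
lemma tendsto_of_sq_bound {ι : Type*} {l : Filter ι} (f : ι → ℂ) (g : ι → ℝ) (α : ℝ)
    (hfg : ∀ i, ‖f i‖ ≤ α * g i ^ 2) (hg : Tendsto g l (nhds 0)) :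
    Tendsto f l (nhds 0) := by
  have h2 : Tendsto (fun i => α * g i ^ 2) l (nhds (α * 0 ^ 2)) := (hg.pow 2).const_mul α
  exact squeeze_zero_norm (fun i => by simpa using hfg i)
    (by simpa using h2)

end Aux10

/-- bounded symmetric perturbations: `(t+b)_reg = t_reg + b` and
`(t+b)_sing = t_sing`. -/
theorem statement10 [NormedAddCommGroup H] [InnerProductSpace ℂ H] [CompleteSpace H]
    {D Db : Submodule ℂ H} (t : Form D)
    (ht : ∃ c, BddBelowBy t c) (htcl : FormClosable t)
    (b : Form Db) (hDb : D ≤ Db)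
    (hbsym : ∀ φ ψ : ↥Db, b φ ψ = (starRingEnd ℂ) (b ψ φ))
    (α : ℝ) (hα : 0 ≤ α)
    (hbbdd : ∀ φ : ↥D,
      ‖b ⟨(φ : H), hDb φ.2⟩ ⟨(φ : H), hDb φ.2⟩‖ ≤ α * ‖(φ : H)‖ ^ 2)
    (tpb : Form D)
    (htpb : ∀ φ ψ : ↥D, tpb φ ψ = t φ ψ + b ⟨(φ : H), hDb φ.2⟩ ⟨(ψ : H), hDb ψ.2⟩)
    (r : Form D) (hr : IsRegularPart t r)
    (rb : Form D)
    (hrb : ∀ φ ψ : ↥D, rb φ ψ = r φ ψ + b ⟨(φ : H), hDb φ.2⟩ ⟨(ψ : H), hDb ψ.2⟩) :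
    IsRegularPart tpb rb ∧
      ∀ r' : Form D, IsRegularPart tpb r' →
        ∀ φ ψ : ↥D, tpb φ ψ - r' φ ψ = t φ ψ - r φ ψ := by
  obtain ⟨hrcl, ⟨c, hrbd⟩, ⟨hlerr, hrlet⟩, hrmax⟩ := hr
  -- the diagonal of b is real
  have hbim : ∀ φ : ↥Db, (b φ φ).im = 0 := fun φ =>
    Complex.conj_eq_iff_im.mp (hbsym φ φ).symm
  -- b-diagonal convergence along a family tending to zero in H
  have hbseq : ∀ {ι : Type} {l : Filter ι} (φ : ι → ↥D),
      Tendsto (fun i => ‖(φ i : H)‖) l (nhds 0) →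
      Tendsto (fun i => b ⟨(φ i : H), hDb (φ i).2⟩ ⟨(φ i : H), hDb (φ i).2⟩) l (nhds 0) := by
    intro ι l φ hφ
    exact tendsto_of_sq_bound _ _ α (fun i => hbbdd (φ i)) hφ
  -- two-sided bounds on the diagonal of b
  have hbdiag : ∀ φ : ↥D, ((-(α * ‖(φ : H)‖ ^ 2) : ℝ) : ℂ)
      ≤ b ⟨(φ : H), hDb φ.2⟩ ⟨(φ : H), hDb φ.2⟩ := by
    intro φ
    rw [Complex.le_def]
    refine ⟨?_, by rw [Complex.ofReal_im, hbim]⟩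
    have h1 := hbbdd φ
    have h2 := Complex.abs_re_le_norm (b ⟨(φ : H), hDb φ.2⟩ ⟨(φ : H), hDb φ.2⟩)
    have h3 := neg_abs_le (b ⟨(φ : H), hDb φ.2⟩ ⟨(φ : H), hDb φ.2⟩).re
    simp only [Complex.ofReal_re]
    linarith [abs_nonneg (b ⟨(φ : H), hDb φ.2⟩ ⟨(φ : H), hDb φ.2⟩).re]
  have hbdiag2 : ∀ φ : ↥D, b ⟨(φ : H), hDb φ.2⟩ ⟨(φ : H), hDb φ.2⟩
      ≤ ((α * ‖(φ : H)‖ ^ 2 : ℝ) : ℂ) := by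
    intro φ
    rw [Complex.le_def]
    refine ⟨?_, by rw [Complex.ofReal_im, hbim]⟩
    have h1 := hbbdd φ
    have h2 := Complex.abs_re_le_norm (b ⟨(φ : H), hDb φ.2⟩ ⟨(φ : H), hDb φ.2⟩)
    have h3 := le_abs_self (b ⟨(φ : H), hDb φ.2⟩ ⟨(φ : H), hDb φ.2⟩).re
    simp only [Complex.ofReal_re]
    linarith
  -- closability of rb
  have hrbcl : FormClosable rb := by
    rintro φ ⟨hφ0, hφC⟩
    have hn : Tendsto (fun n => ‖(φ n : H)‖) atTop (nhds 0) := by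
      simpa using hφ0.norm
    have hnΔ : Tendsto (fun p : ℕ × ℕ => ‖((φ p.1 - φ p.2 : ↥D) : H)‖)
        (atTop ×ˢ atTop) (nhds 0) := by
      have h1 : Tendsto (fun p : ℕ × ℕ => ‖(φ p.1 : H)‖ + ‖(φ p.2 : H)‖)
          (atTop ×ˢ atTop) (nhds 0) := by
        simpa using (hn.comp tendsto_fst).add (hn.comp tendsto_snd)
      refine squeeze_zero (fun p => norm_nonneg _) (fun p => ?_) h1
      simpa using norm_sub_le (φ p.1 : H) (φ p.2 : H)
    have hbΔ := hbseq (fun p : ℕ × ℕ => φ p.1 - φ p.2) hnΔ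
    have hrΔ : Tendsto (fun p : ℕ × ℕ => r (φ p.1 - φ p.2) (φ p.1 - φ p.2))
        (atTop ×ˢ atTop) (nhds 0) := by
      have he : (fun p : ℕ × ℕ => r (φ p.1 - φ p.2) (φ p.1 - φ p.2))
          = fun p : ℕ × ℕ => rb (φ p.1 - φ p.2) (φ p.1 - φ p.2)
            - b ⟨((φ p.1 - φ p.2 : ↥D) : H), hDb (φ p.1 - φ p.2).2⟩
                ⟨((φ p.1 - φ p.2 : ↥D) : H), hDb (φ p.1 - φ p.2).2⟩ := by
        funext p; rw [hrb]; ring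
      rw [he]
      simpa using hφC.sub hbΔ
    have hrr := hrcl φ ⟨hφ0, hrΔ⟩
    have hbn := hbseq φ hn
    have he2 : (fun n => rb (φ n) (φ n)) = fun n => r (φ n) (φ n)
        + b ⟨(φ n : H), hDb (φ n).2⟩ ⟨(φ n : H), hDb (φ n).2⟩ := funext fun n => hrb _ _
    rw [he2]
    simpa using hrr.add hbn
  -- lower bound for rb
  have hrbbd : BddBelowBy rb (c - α) := by
    intro φ
    rw [hrb]
    have h1 := hrbd φ
    have h2 := hbdiag φ
    calc (((c - α) * ‖(φ : H)‖ ^ 2 : ℝ) : ℂ)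
        = ((c * ‖(φ : H)‖ ^ 2 : ℝ) : ℂ) + ((-(α * ‖(φ : H)‖ ^ 2) : ℝ) : ℂ) := by
          push_cast; ring
      _ ≤ _ := add_le_add h1 h2
  -- rb ≤ tpb
  have hrble : FormLE rb tpb := by
    refine ⟨le_refl D, fun φ => ?_⟩
    simp only [Subtype.coe_eta]
    rw [hrb, htpb]
    have h1 := hrlet φ
    simp only [Subtype.coe_eta] at h1
    exact add_le_add h1 le_rfl
  -- maximality of rb
  have hrbmax : ∀ (Du : Submodule ℂ H) (u : Form Du), FormClosable u →
      (∃ cu, BddBelowBy u cu) → FormLE u tpb → FormLE u rb := by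
    rintro Du u hucl ⟨cu, hubd⟩ ⟨h', hule⟩
    set v : Form D := restrictForm h' u - restrictForm hDb b with hv
    have hvap : ∀ φ ψ : ↥D, v φ ψ
        = u ⟨(φ : H), h' φ.2⟩ ⟨(ψ : H), h' ψ.2⟩
          - b ⟨(φ : H), hDb φ.2⟩ ⟨(ψ : H), hDb ψ.2⟩ := by
      intro φ ψ
      simp only [hv, LinearMap.sub_apply, restrictForm_apply]
    have hvcl : FormClosable v := by
      rintro φ ⟨hφ0, hφC⟩
      have hn : Tendsto (fun n => ‖(φ n : H)‖) atTop (nhds 0) := by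
        simpa using hφ0.norm
      have hnΔ : Tendsto (fun p : ℕ × ℕ => ‖((φ p.1 - φ p.2 : ↥D) : H)‖)
          (atTop ×ˢ atTop) (nhds 0) := by
        have h1 : Tendsto (fun p : ℕ × ℕ => ‖(φ p.1 : H)‖ + ‖(φ p.2 : H)‖)
            (atTop ×ˢ atTop) (nhds 0) := by
          simpa using (hn.comp tendsto_fst).add (hn.comp tendsto_snd)
        refine squeeze_zero (fun p => norm_nonneg _) (fun p => ?_) h1
        simpa using norm_sub_le (φ p.1 : H) (φ p.2 : H)
      have hbΔ := hbseq (fun p : ℕ × ℕ => φ p.1 - φ p.2) hnΔ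
      have hucauchy : Tendsto (fun p : ℕ × ℕ =>
          u ((⟨(φ p.1 : H), h' (φ p.1).2⟩ : ↥Du) - ⟨(φ p.2 : H), h' (φ p.2).2⟩)
            ((⟨(φ p.1 : H), h' (φ p.1).2⟩ : ↥Du) - ⟨(φ p.2 : H), h' (φ p.2).2⟩))
          (atTop ×ˢ atTop) (nhds 0) := by
        have he : (fun p : ℕ × ℕ =>
            u ((⟨(φ p.1 : H), h' (φ p.1).2⟩ : ↥Du) - ⟨(φ p.2 : H), h' (φ p.2).2⟩)
              ((⟨(φ p.1 : H), h' (φ p.1).2⟩ : ↥Du) - ⟨(φ p.2 : H), h' (φ p.2).2⟩))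
            = fun p : ℕ × ℕ => v (φ p.1 - φ p.2) (φ p.1 - φ p.2)
              + b ⟨((φ p.1 - φ p.2 : ↥D) : H), hDb (φ p.1 - φ p.2).2⟩
                  ⟨((φ p.1 - φ p.2 : ↥D) : H), hDb (φ p.1 - φ p.2).2⟩ := by
          funext p
          have hkey : ((⟨(φ p.1 : H), h' (φ p.1).2⟩ : ↥Du) - ⟨(φ p.2 : H), h' (φ p.2).2⟩)
              = (⟨((φ p.1 - φ p.2 : ↥D) : H), h' (φ p.1 - φ p.2).2⟩ : ↥Du) :=
            Subtype.ext (by simp)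
          rw [hkey, hvap]
          ring
        rw [he]
        simpa using hφC.add hbΔ
      have hu := hucl (fun n => (⟨(φ n : H), h' (φ n).2⟩ : ↥Du)) ⟨by simpa using hφ0, hucauchy⟩
      have hbn := hbseq φ hn
      have he2 : (fun n => v (φ n) (φ n)) = fun n =>
          u ⟨(φ n : H), h' (φ n).2⟩ ⟨(φ n : H), h' (φ n).2⟩
            - b ⟨(φ n : H), hDb (φ n).2⟩ ⟨(φ n : H), hDb (φ n).2⟩ :=
        funext fun n => hvap _ _
      rw [he2]
      simpa using hu.sub hbn
    have hvbd : BddBelowBy v (cu - α) := by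
      intro φ
      rw [hvap]
      have h1 := hubd ⟨(φ : H), h' φ.2⟩
      have h2 := hbdiag2 φ
      have he : (((cu - α) * ‖(φ : H)‖ ^ 2 : ℝ) : ℂ)
          = ((cu * ‖(φ : H)‖ ^ 2 : ℝ) : ℂ) - ((α * ‖(φ : H)‖ ^ 2 : ℝ) : ℂ) := by
        push_cast; ring
      rw [he]
      exact sub_le_sub h1 h2
    have hvle : FormLE v t := by
      refine ⟨le_refl D, fun φ => ?_⟩
      simp only [Subtype.coe_eta]
      rw [hvap]
      have h1 := hule φ
      rw [htpb] at h1
      exact sub_le_iff_le_add.mpr h1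
    obtain ⟨hD, hvr⟩ := hrmax D v hvcl ⟨cu - α, hvbd⟩ hvle
    refine ⟨h', fun φ => ?_⟩
    have h3 := hvr φ
    simp only [Subtype.coe_eta] at h3
    rw [hvap] at h3
    rw [hrb]
    exact sub_le_iff_le_add.mp h3
  have hRB : IsRegularPart tpb rb := ⟨hrbcl, ⟨c - α, hrbbd⟩, hrble, hrbmax⟩
  refine ⟨hRB, fun r' hr' φ ψ => ?_⟩
  obtain ⟨hle1, hd1⟩ := hrbmax D r' hr'.1 hr'.2.1 hr'.2.2.1
  obtain ⟨hle2, hd2⟩ := hr'.2.2.2 D rb hrbcl ⟨c - α, hrbbd⟩ hrble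
  have hdiag : ∀ χ : ↥D, (r' - rb) χ χ = 0 := by
    intro χ
    have a1 := hd1 χ
    have a2 := hd2 χ
    simp only [Subtype.coe_eta] at a1 a2
    simp only [LinearMap.sub_apply]
    rw [le_antisymm a1 a2, sub_self]
  have heq := polarization_zero (r' - rb) hdiag φ ψ
  simp only [LinearMap.sub_apply] at heq
  rw [htpb, sub_eq_zero.mp heq, hrb]
  ring
end
end

section
/- Let h be a nonnegative form on H with representing map Q : dom h → K, and suppose h = h₁ + h₂ with h₁, h₂ nonnegative forms on dom h. Then there exists a nonnegative contraction K₀ ∈ B(K) such that h₁[φ,ψ] = ⟨(I−K₀)^{1/2}Qφ, (I−K₀)^{1/2}Qψ⟩ and h₂[φ,ψ] = ⟨K₀^{1/2}Qφ, K₀^{1/2}Qψ⟩ for all φ,ψ ∈ dom h. If moreover ran Q is dense in K, this contraction K₀ is unique. -/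
open Filter Topology
open scoped ComplexOrder

noncomputable section

variable {H K K' : Type*}

section AuxLemmas

variable [NormedAddCommGroup H] [InnerProductSpace ℂ H] {D : Submodule ℂ H}

private lemma form_expand (t : Form D) (φ ψ : ↥D) (c : ℂ) :
    t (φ + c • ψ) (φ + c • ψ)
      = t φ φ + starRingEnd ℂ c * t φ ψ + c * t ψ φ + c * starRingEnd ℂ c * t ψ ψ := by
  simp only [map_add, map_smul, map_smulₛₗ, LinearMap.add_apply, LinearMap.smul_apply,
    smul_eq_mul]
  ring

private lemma form_hermit (t : Form D) (hd : ∀ φ : ↥D, (t φ φ).im = 0) (φ ψ : ↥D) :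
    t ψ φ = (starRingEnd ℂ) (t φ ψ) := by
  have e1 : (t φ ψ).im + (t ψ φ).im = 0 := by
    have h := hd (φ + (1 : ℂ) • ψ)
    rw [form_expand] at h
    simp only [map_one, one_mul, mul_one, Complex.add_im, hd φ, hd ψ] at h
    linarith
  have e2 : (t ψ φ).re - (t φ ψ).re = 0 := by
    have h := hd (φ + Complex.I • ψ)
    rw [form_expand] at h
    simp only [Complex.conj_I, Complex.add_im, Complex.mul_im, Complex.neg_re, Complex.neg_im,
      Complex.I_re, Complex.I_im, hd φ, hd ψ, Complex.mul_re] at h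
    ring_nf at h ⊢
    linarith
  apply Complex.ext <;> simp [Complex.conj_re, Complex.conj_im] <;> linarith

private lemma form_cs (t : Form D) (hd : ∀ φ : ↥D, 0 ≤ t φ φ) (φ ψ : ↥D) :
    ‖t φ ψ‖ ^ 2 ≤ (t φ φ).re * (t ψ ψ).re := by
  have him : ∀ χ : ↥D, (t χ χ).im = 0 := fun χ => by
    have := (Complex.le_def.mp (hd χ)).2; simpa using this.symm
  have hre : ∀ χ : ↥D, 0 ≤ (t χ χ).re := fun χ => by
    have := (Complex.le_def.mp (hd χ)).1; simpa using this
  have herm := form_hermit t him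
  set d : ℂ := t ψ φ with hdd
  have htφψ : t φ ψ = starRingEnd ℂ d := by
    rw [hdd, herm ψ φ]
  have habs : ‖t φ ψ‖ = ‖d‖ := by
    rw [htφψ, Complex.norm_conj]
  set u : ℂ := if d = 0 then 1 else (‖d‖ : ℂ) / d with hu
  have hud : u * d = (‖d‖ : ℂ) := by
    by_cases h0 : d = 0
    · simp [hu, h0]
    · rw [hu, if_neg h0, div_mul_cancel₀ _ h0]
  have hnsu : Complex.normSq u = 1 := by
    by_cases h0 : d = 0
    · simp [hu, h0]
    · rw [hu, if_neg h0, Complex.normSq_div, Complex.normSq_ofReal, Complex.normSq_eq_norm_sq]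
      have : ‖d‖ ≠ 0 := by simpa using h0
      field_simp
  have key : ∀ r : ℝ, 0 ≤ (t ψ ψ).re * (r * r) + 2 * ‖d‖ * r + (t φ φ).re := by
    intro r
    set c : ℂ := (r : ℂ) * u with hc
    have hcd : c * d = ((r * ‖d‖ : ℝ) : ℂ) := by
      rw [hc, mul_assoc, hud]; push_cast; ring
    have h0 := hre (φ + c • ψ)
    rw [form_expand] at h0
    have h1 : starRingEnd ℂ c * t φ ψ = ((r * ‖d‖ : ℝ) : ℂ) := by
      rw [htφψ, ← map_mul, hcd, Complex.conj_ofReal]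
    have h2 : c * t ψ φ = ((r * ‖d‖ : ℝ) : ℂ) := by rw [← hdd, hcd]
    have h3 : c * starRingEnd ℂ c = ((r ^ 2 : ℝ) : ℂ) := by
      rw [Complex.mul_conj, hc, Complex.normSq_mul, Complex.normSq_ofReal, hnsu]
      push_cast; ring
    rw [h1, h2, h3] at h0
    simp only [Complex.add_re, Complex.ofReal_re, Complex.mul_re, Complex.ofReal_im,
      him ψ] at h0
    nlinarith [h0]
  have hdis := discrim_le_zero key
  rw [discrim] at hdis
  rw [habs]
  nlinarith [hdis, norm_nonneg d]

end AuxLemmas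

set_option maxHeartbeats 2000000 in
/-- every sum decomposition `h = h₁ + h₂` into nonnegative forms arises
from a nonnegative contraction `K₀`, unique when `ran Q` is dense. -/
theorem statement12 [NormedAddCommGroup H] [InnerProductSpace ℂ H]
    [NormedAddCommGroup K] [InnerProductSpace ℂ K] [CompleteSpace K]
    {D : Submodule ℂ H} (h h₁ h₂ : Form D)
    (Q : ↥D →ₗ[ℂ] K) (hQ : IsRepMap h 0 Q)
    (hpos₁ : BddBelowBy h₁ 0) (hpos₂ : BddBelowBy h₂ 0)
    (hsum : ∀ φ ψ : ↥D, h φ ψ = h₁ φ ψ + h₂ φ ψ) :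
    ∃ K₀ : K →L[ℂ] K, K₀.IsPositive ∧ (1 - K₀).IsPositive ∧
      (∃ A B : K →L[ℂ] K, A.IsPositive ∧ B.IsPositive ∧
        A * A = 1 - K₀ ∧ B * B = K₀ ∧
        (∀ φ ψ : ↥D, h₁ φ ψ = (inner ℂ (A (Q ψ)) (A (Q φ)) : ℂ)) ∧
        (∀ φ ψ : ↥D, h₂ φ ψ = (inner ℂ (B (Q ψ)) (B (Q φ)) : ℂ))) ∧
      (Dense (Set.range fun φ : ↥D => Q φ) →
        ∀ K₀' : K →L[ℂ] K, K₀'.IsPositive → (1 - K₀').IsPositive →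
          (∃ A' B' : K →L[ℂ] K, A'.IsPositive ∧ B'.IsPositive ∧
            A' * A' = 1 - K₀' ∧ B' * B' = K₀' ∧
            (∀ φ ψ : ↥D, h₁ φ ψ = (inner ℂ (A' (Q ψ)) (A' (Q φ)) : ℂ)) ∧
            (∀ φ ψ : ↥D, h₂ φ ψ = (inner ℂ (B' (Q ψ)) (B' (Q φ)) : ℂ))) →
          K₀' = K₀) := by
  classical
  have hQ' : ∀ φ ψ : ↥D, h φ ψ = (inner ℂ (Q ψ) (Q φ) : ℂ) := by
    intro φ ψ; have := hQ φ ψ; simpa using this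
  have hd2 : ∀ φ : ↥D, 0 ≤ h₂ φ φ := fun φ => by simpa using hpos₂ φ
  have hd1 : ∀ φ : ↥D, 0 ≤ h₁ φ φ := fun φ => by simpa using hpos₁ φ
  -- diagonal bound
  have hdiag : ∀ φ : ↥D, (h₂ φ φ).re ≤ ‖Q φ‖ ^ 2 := by
    intro φ
    have h1 : h φ φ = ((‖Q φ‖ : ℂ)) ^ 2 := (hQ' φ φ).trans (inner_self_eq_norm_sq_to_K _)
    have h2 := hsum φ φ
    have h3 : (h₁ φ φ).re + (h₂ φ φ).re = ‖Q φ‖ ^ 2 := by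
      have := congrArg Complex.re (h2.symm.trans h1)
      simpa [Complex.add_re, ← Complex.ofReal_pow, Complex.ofReal_re] using this
    have := (Complex.le_def.mp (hd1 φ)).1
    simp only [Complex.zero_re] at this
    linarith
  -- Cauchy-Schwarz-type bound
  have hbd : ∀ φ ψ : ↥D, ‖h₂ φ ψ‖ ≤ ‖Q φ‖ * ‖Q ψ‖ := by
    intro φ ψ
    have := form_cs h₂ hd2 φ ψ
    have h1 := hdiag φ; have h2 := hdiag ψ
    have h3 : 0 ≤ (h₂ φ φ).re := by
      have := (Complex.le_def.mp (hd2 φ)).1; simpa using this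
    have h4 : 0 ≤ (h₂ ψ ψ).re := by
      have := (Complex.le_def.mp (hd2 ψ)).1; simpa using this
    have h5 : ‖h₂ φ ψ‖ ^ 2 ≤ (‖Q φ‖ * ‖Q ψ‖) ^ 2 := by nlinarith
    exact (pow_le_pow_iff_left₀ (norm_nonneg _) (by positivity) two_ne_zero).mp h5
  -- well-definedness modulo ker Q
  have hwd : ∀ {ψ ψ' : ↥D}, Q ψ = Q ψ' → ∀ φ : ↥D, h₂ φ ψ = h₂ φ ψ' ∧ h₂ ψ φ = h₂ ψ' φ := by
    intro ψ ψ' hQψ φ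
    have hz : Q (ψ - ψ') = 0 := by rw [map_sub, hQψ, sub_self]
    have b1 : ‖h₂ φ (ψ - ψ')‖ = 0 := by
      have := hbd φ (ψ - ψ'); rw [hz, norm_zero, mul_zero] at this
      exact le_antisymm this (norm_nonneg _)
    have b2 : ‖h₂ (ψ - ψ') φ‖ = 0 := by
      have := hbd (ψ - ψ') φ; rw [hz, norm_zero, zero_mul] at this
      exact le_antisymm this (norm_nonneg _)
    constructor
    · have : h₂ φ (ψ - ψ') = 0 := norm_eq_zero.mp b1
      rw [map_sub] at this
      linear_combination this
    · have : h₂ (ψ - ψ') φ = 0 := norm_eq_zero.mp b2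
      rw [map_sub, LinearMap.sub_apply] at this
      linear_combination this
  -- the range of Q and its closure
  set N : Submodule ℂ K := LinearMap.range Q with hN
  set M : Submodule ℂ K := N.topologicalClosure with hM
  have memN : ∀ ψ : ↥D, Q ψ ∈ N := fun ψ => ⟨ψ, rfl⟩
  have hNM : N ≤ M := Submodule.le_topologicalClosure N
  have memM : ∀ ψ : ↥D, Q ψ ∈ M := fun ψ => hNM (memN ψ)
  haveI : CompleteSpace ↥M := N.isClosed_topologicalClosure.completeSpace_coe
  -- a choice of preimages
  set σ : ↥N → ↥D := fun y => (LinearMap.mem_range.mp y.2).choose with hσ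
  have hQσ : ∀ y : ↥N, Q (σ y) = (y : K) := fun y => (LinearMap.mem_range.mp y.2).choose_spec
  -- bounded functionals on N
  have hF : ∀ ψ : ↥D, ∃ F : ↥N →L[ℂ] ℂ, (∀ y : ↥N, F y = h₂ (σ y) ψ) ∧ ∀ y, ‖F y‖ ≤ ‖Q ψ‖ * ‖y‖ := by
    intro ψ
    have hadd : ∀ y z : ↥N, h₂ (σ (y + z)) ψ = h₂ (σ y) ψ + h₂ (σ z) ψ := by
      intro y z
      have hq : Q (σ (y + z)) = Q (σ y + σ z) := by simp [map_add, hQσ]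
      rw [(hwd hq ψ).2, map_add, LinearMap.add_apply]
    have hsmul : ∀ (a : ℂ) (y : ↥N), h₂ (σ (a • y)) ψ = a * h₂ (σ y) ψ := by
      intro a y
      have hq : Q (σ (a • y)) = Q (a • σ y) := by simp [map_smul, hQσ]
      rw [(hwd hq ψ).2, map_smul, LinearMap.smul_apply, smul_eq_mul]
    have hb : ∀ y : ↥N, ‖h₂ (σ y) ψ‖ ≤ ‖Q ψ‖ * ‖y‖ := by
      intro y
      have h5 := hbd (σ y) ψ
      rw [hQσ] at h5
      calc ‖h₂ (σ y) ψ‖ = ‖h₂ (σ y) ψ‖ := rfl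
        _ ≤ ‖(y : K)‖ * ‖Q ψ‖ := h5
        _ = ‖Q ψ‖ * ‖y‖ := by rw [mul_comm]; rfl
    exact ⟨LinearMap.mkContinuous
      { toFun := fun y => h₂ (σ y) ψ, map_add' := hadd, map_smul' := hsmul } ‖Q ψ‖ hb,
      fun y => rfl, hb⟩
  choose F hFapply hFbound using hF
  have hFnorm : ∀ ψ, ‖F ψ‖ ≤ ‖Q ψ‖ := fun ψ =>
    ContinuousLinearMap.opNorm_le_bound _ (norm_nonneg _) (hFbound ψ)
  -- the inclusion of N into M
  set e : ↥N →L[ℂ] ↥M := LinearMap.mkContinuous (Submodule.inclusion hNM) 1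
    (fun y => by rw [one_mul]; rfl) with hedef
  have hecoe : ∀ y : ↥N, ((e y : ↥M) : K) = (y : K) := fun y => rfl
  have heiso : Isometry e := AddMonoidHomClass.isometry_of_norm e (fun y => rfl)
  have he : IsUniformInducing e := heiso.isUniformInducing
  have hdense : DenseRange e := by
    intro z
    have hz : (z : K) ∈ closure (N : Set K) := by
      have hMc : (M : Set K) = closure (N : Set K) := by
        rw [hM]; exact Submodule.topologicalClosure_coe N
      rw [← hMc]; exact z.2
    have himg : (Subtype.val '' Set.range (⇑e)) = (N : Set K) := by
      ext x; constructor
      · rintro ⟨m, ⟨y, rfl⟩, rfl⟩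
        rw [hecoe]; exact y.2
      · intro hx; exact ⟨e ⟨x, hx⟩, ⟨⟨x, hx⟩, rfl⟩, rfl⟩
    rw [closure_subtype, himg]
    exact hz
  -- the representing vectors
  set w : ↥D → K := fun ψ =>
    (((InnerProductSpace.toDual ℂ ↥M).symm ((F ψ).extend e) : ↥M) : K) with hwdef
  have hwM : ∀ ψ : ↥D, w ψ ∈ M := fun ψ => SetLike.coe_mem _
  have hw : ∀ ψ φ : ↥D, (inner ℂ (w ψ) (Q φ) : ℂ) = h₂ φ ψ := by
    intro ψ φ
    set n : ↥N := ⟨Q φ, memN φ⟩ with hn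
    have h7 : (inner ℂ (w ψ) (Q φ) : ℂ)
        = (inner ℂ ((InnerProductSpace.toDual ℂ ↥M).symm ((F ψ).extend e)) (e n) : ℂ) := by
      rfl
    rw [h7, InnerProductSpace.toDual_symm_apply,
      ContinuousLinearMap.extend_eq _ hdense he, hFapply]
    have hq : Q (σ n) = Q φ := hQσ n
    exact (hwd hq ψ).2
  -- orthogonality lemma
  have ortho : ∀ v : K, v ∈ M → (∀ φ : ↥D, (inner ℂ v (Q φ) : ℂ) = 0) → v = 0 := by
    intro v hv hvQ
    have hS : closure (N : Set K) ⊆ {y : K | (inner ℂ v y : ℂ) = 0} := by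
      apply closure_minimal
      · rintro y ⟨φ, rfl⟩
        exact hvQ φ
      · exact isClosed_eq (continuous_const.inner continuous_id) continuous_const
    have hvM : v ∈ closure (N : Set K) := by
      have hMc : (M : Set K) = closure (N : Set K) := by
        rw [hM]; exact Submodule.topologicalClosure_coe N
      rw [← hMc]; exact hv
    have : (inner ℂ v v : ℂ) = 0 := hS hvM
    exact inner_self_eq_zero.mp this
  -- norm bound on w
  have hwnorm : ∀ ψ : ↥D, ‖w ψ‖ ≤ ‖Q ψ‖ := by
    intro ψ
    have h8 : ‖w ψ‖ = ‖(F ψ).extend e‖ := by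
      have h8a : ‖w ψ‖
          = ‖((InnerProductSpace.toDual ℂ ↥M).symm ((F ψ).extend e) : ↥M)‖ := rfl
      rw [h8a, LinearIsometryEquiv.norm_map]
    have h9 : ∀ y : ↥N, ‖y‖ ≤ ((1 : NNReal) : ℝ) * ‖e y‖ := fun y => by
      rw [NNReal.coe_one, one_mul]; exact le_of_eq (heiso.norm_map_of_map_zero (map_zero e) y).symm
    have h10 := ContinuousLinearMap.opNorm_extend_le (F ψ) hdense h9
    rw [h8]
    calc ‖(F ψ).extend e‖ ≤ ((1 : NNReal) : ℝ) * ‖F ψ‖ := h10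
      _ ≤ ‖Q ψ‖ := by rw [NNReal.coe_one, one_mul]; exact hFnorm ψ
  -- uniqueness characterization of w
  have wchar : ∀ (v : K) (ψ : ↥D), v ∈ M → (∀ φ : ↥D, (inner ℂ v (Q φ) : ℂ) = h₂ φ ψ) → v = w ψ := by
    intro v ψ hv hvQ
    have h13 : v - w ψ = 0 := ortho _ (Submodule.sub_mem M hv (hwM ψ)) (fun φ => by
      rw [inner_sub_left, hvQ φ, hw ψ φ, sub_self])
    have := sub_eq_zero.mp h13
    exact this
  -- the operator on N
  have hfadd : ∀ y z : ↥N, w (σ (y + z)) = w (σ y) + w (σ z) := by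
    intro y z
    refine ((wchar (w (σ y) + w (σ z)) (σ (y + z)) (Submodule.add_mem M (hwM _) (hwM _)) ?_)).symm
    intro φ
    have hq : Q (σ (y + z)) = Q (σ y + σ z) := by simp [map_add, hQσ]
    rw [inner_add_left, hw, hw, (hwd hq φ).1, map_add]
  have hfsmul : ∀ (a : ℂ) (y : ↥N), w (σ (a • y)) = a • w (σ y) := by
    intro a y
    refine ((wchar (a • w (σ y)) (σ (a • y)) (Submodule.smul_mem M a (hwM _)) ?_)).symm
    intro φ
    have hq : Q (σ (a • y)) = Q (a • σ y) := by simp [map_smul, hQσ]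
    rw [inner_smul_left, hw, (hwd hq φ).1, map_smulₛₗ, smul_eq_mul]
  set f : ↥N →L[ℂ] K := LinearMap.mkContinuous
    { toFun := fun y => w (σ y), map_add' := hfadd, map_smul' := hfsmul } 1
    (fun y => by
      rw [one_mul]
      calc ‖w (σ y)‖ ≤ ‖Q (σ y)‖ := hwnorm _
        _ = ‖y‖ := by rw [hQσ]; rfl) with hfdef
  have hfapply : ∀ y : ↥N, f y = w (σ y) := fun y => rfl
  set g : ↥M →L[ℂ] K := f.extend e with hgdef
  have hge : ∀ y : ↥N, g (e y) = w (σ y) := fun y => ContinuousLinearMap.extend_eq _ hdense he y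
  set P : K →L[ℂ] ↥M := M.orthogonalProjection with hPdef
  set K₀ : K →L[ℂ] K := g.comp P with hK0def
  -- key identity
  have hK₀Q : ∀ ψ : ↥D, K₀ (Q ψ) = w ψ := by
    intro ψ
    have hm : Q ψ ∈ M := memM ψ
    have h11 : P (Q ψ) = (⟨Q ψ, hm⟩ : ↥M) := by
      rw [hPdef]; exact Submodule.orthogonalProjection_mem_subspace_eq_self (⟨Q ψ, hm⟩ : ↥M)
    have h12 : (⟨Q ψ, hm⟩ : ↥M) = e ⟨Q ψ, memN ψ⟩ := rfl
    have h14 : K₀ (Q ψ) = g (e ⟨Q ψ, memN ψ⟩) := by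
      rw [hK0def, ContinuousLinearMap.comp_apply, h11, h12]
    rw [h14, hge]
    refine (wchar (w (σ ⟨Q ψ, memN ψ⟩)) ψ (hwM _) ?_).symm.symm
    intro φ
    rw [hw]
    exact (hwd (hQσ ⟨Q ψ, memN ψ⟩) φ).1
  have hK₀inner : ∀ φ ψ : ↥D, (inner ℂ (K₀ (Q ψ)) (Q φ) : ℂ) = h₂ φ ψ := by
    intro φ ψ; rw [hK₀Q]; exact hw ψ φ
  -- range of K₀ lies in M
  have hgM : ∀ z : ↥M, g z ∈ M := by
    intro z
    refine hdense.induction_on z ?_ (fun y => ?_)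
    · have : IsClosed (M : Set K) := by
        rw [hM]; exact N.isClosed_topologicalClosure
      exact this.preimage g.continuous
    · rw [hge]; exact hwM _
  have ranM : ∀ x : K, K₀ x ∈ M := fun x => hgM (P x)
  -- reduction of the quadratic form to M
  have innerK₀ : ∀ x : K, (inner ℂ (K₀ x) x : ℂ) = (inner ℂ (g (P x)) (((P x) : ↥M) : K) : ℂ) := by
    intro x
    have hx : (((P x) : ↥M) : K) + (x - ↑(P x)) = x := by abel
    have horth : (inner ℂ (K₀ x) (x - ↑(P x)) : ℂ) = 0 :=
      (Submodule.mem_orthogonal M (x - ↑(P x))).mp (M.sub_starProjection_mem_orthogonal x)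
        (K₀ x) (ranM x)
    calc (inner ℂ (K₀ x) x : ℂ) = (inner ℂ (K₀ x) ((((P x) : ↥M) : K) + (x - ↑(P x))) : ℂ) := by
          rw [hx]
      _ = (inner ℂ (K₀ x) (((P x) : ↥M) : K) : ℂ) + (inner ℂ (K₀ x) (x - ↑(P x)) : ℂ) :=
          inner_add_right _ _ _
      _ = (inner ℂ (g (P x)) (((P x) : ↥M) : K) : ℂ) := by rw [horth, add_zero]; rfl
  -- diagonal values on M
  have hcont : Continuous fun z : ↥M => (inner ℂ (g z) ((z : K)) : ℂ) :=
    Continuous.inner g.continuous continuous_subtype_val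
  have hey : ∀ y : ↥N, (inner ℂ (g (e y)) ((e y : ↥M) : K) : ℂ) = h₂ (σ y) (σ y) := by
    intro y
    have : ((e y : ↥M) : K) = Q (σ y) := by rw [hecoe, hQσ]
    rw [hge, this, hw]
  have hgim : ∀ z : ↥M, (inner ℂ (g z) ((z : K)) : ℂ).im = 0 := by
    intro z
    refine hdense.induction_on z ?_ (fun y => ?_)
    · exact isClosed_eq (Complex.continuous_im.comp hcont) continuous_const
    · rw [hey y]
      have := (Complex.le_def.mp (hd2 (σ y))).2; simpa using this.symm
  have hgre0 : ∀ z : ↥M, 0 ≤ (inner ℂ (g z) ((z : K)) : ℂ).re := by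
    intro z
    refine hdense.induction_on z ?_ (fun y => ?_)
    · exact isClosed_le continuous_const (Complex.continuous_re.comp hcont)
    · rw [hey y]
      have := (Complex.le_def.mp (hd2 (σ y))).1; simpa using this
  have hgreB : ∀ z : ↥M, (inner ℂ (g z) ((z : K)) : ℂ).re ≤ ‖(z : K)‖ ^ 2 := by
    intro z
    refine hdense.induction_on z ?_ (fun y => ?_)
    · exact isClosed_le (Complex.continuous_re.comp hcont) (continuous_subtype_val.norm.pow 2)
    · rw [hey y]
      have h15 := hdiag (σ y)
      have h16 : ((e y : ↥M) : K) = Q (σ y) := by rw [hecoe, hQσ]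
      rw [h16]
      exact h15
  have hdiagK₀ : ∀ x : K,
      (inner ℂ (K₀ x) x : ℂ).im = 0 ∧ 0 ≤ (inner ℂ (K₀ x) x : ℂ).re ∧
        (inner ℂ (K₀ x) x : ℂ).re ≤ ‖x‖ ^ 2 := by
    intro x
    rw [innerK₀ x]
    refine ⟨hgim (P x), hgre0 (P x), le_trans (hgreB (P x)) ?_⟩
    have h17 : ‖(((P x) : ↥M) : K)‖ = ‖P x‖ := rfl
    have h18 : ‖P x‖ ≤ ‖x‖ := by
      calc ‖P x‖ ≤ ‖P‖ * ‖x‖ := P.le_opNorm x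
        _ ≤ 1 * ‖x‖ := by
            refine mul_le_mul_of_nonneg_right ?_ (norm_nonneg x)
            rw [hPdef]; exact M.orthogonalProjection_norm_le
        _ = ‖x‖ := one_mul _
    rw [h17]
    exact pow_le_pow_left₀ (norm_nonneg _) h18 2
  have posK₀ : K₀.IsPositive := by
    rw [ContinuousLinearMap.isPositive_iff_complex]
    intro x
    obtain ⟨him, hre, _⟩ := hdiagK₀ x
    refine ⟨?_, by simpa [RCLike.re_to_complex] using hre⟩
    apply Complex.ext
    · simp [RCLike.re_to_complex]
    · simp [RCLike.re_to_complex, him]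
  have pos1K₀ : (1 - K₀).IsPositive := by
    rw [ContinuousLinearMap.isPositive_iff_complex]
    intro x
    obtain ⟨him, _, hreB⟩ := hdiagK₀ x
    have hx : (inner ℂ ((1 - K₀) x) x : ℂ) = (inner ℂ x x : ℂ) - (inner ℂ (K₀ x) x : ℂ) := by
      rw [ContinuousLinearMap.sub_apply, ContinuousLinearMap.one_apply, inner_sub_left]
    have hselfim : (inner ℂ x x : ℂ).im = 0 := by
      rw [inner_self_eq_norm_sq_to_K]
      simp [← Complex.ofReal_pow]
    have hselfre : (inner ℂ x x : ℂ).re = ‖x‖ ^ 2 := by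
      rw [inner_self_eq_norm_sq_to_K]
      simp [← Complex.ofReal_pow]
    refine ⟨?_, ?_⟩
    · apply Complex.ext
      · simp [RCLike.re_to_complex]
      · rw [Complex.ofReal_im, hx]
        simp [Complex.sub_im, hselfim, him, ← Complex.ofReal_pow]
    · have : (inner ℂ ((1 - K₀) x) x : ℂ).re = ‖x‖ ^ 2 - (inner ℂ (K₀ x) x : ℂ).re := by
        rw [hx, Complex.sub_re, hselfre]
      simp only [RCLike.re_to_complex, this]
      linarith
  -- square roots via continuous functional calculus
  have hK0nn : (0 : K →L[ℂ] K) ≤ K₀ := (ContinuousLinearMap.nonneg_iff_isPositive K₀).mpr posK₀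
  have h1nn : (0 : K →L[ℂ] K) ≤ 1 - K₀ :=
    (ContinuousLinearMap.nonneg_iff_isPositive _).mpr pos1K₀
  set A : K →L[ℂ] K := CFC.sqrt (1 - K₀) with hA
  set B : K →L[ℂ] K := CFC.sqrt K₀ with hB
  have hAnn : (0 : K →L[ℂ] K) ≤ A := CFC.sqrt_nonneg _
  have hBnn : (0 : K →L[ℂ] K) ≤ B := CFC.sqrt_nonneg _
  have hApos : A.IsPositive := (ContinuousLinearMap.nonneg_iff_isPositive A).mp hAnn
  have hBpos : B.IsPositive := (ContinuousLinearMap.nonneg_iff_isPositive B).mp hBnn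
  have hAA : A * A = 1 - K₀ := CFC.sqrt_mul_sqrt_self _ h1nn
  have hBB : B * B = K₀ := CFC.sqrt_mul_sqrt_self _ hK0nn
  have hmove : ∀ (T : K →L[ℂ] K), T.IsPositive → ∀ x y : K,
      (inner ℂ (T x) (T y) : ℂ) = (inner ℂ ((T * T) x) y : ℂ) := by
    intro T hT x y
    have hsa : ContinuousLinearMap.adjoint T = T := hT.isSelfAdjoint.adjoint_eq
    calc (inner ℂ (T x) (T y) : ℂ)
        = (inner ℂ (ContinuousLinearMap.adjoint T (T x)) y : ℂ) :=
          (ContinuousLinearMap.adjoint_inner_left T y (T x)).symm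
      _ = (inner ℂ ((T * T) x) y : ℂ) := by rw [hsa]; rfl
  have hrep2 : ∀ φ ψ : ↥D, h₂ φ ψ = (inner ℂ (B (Q ψ)) (B (Q φ)) : ℂ) := by
    intro φ ψ
    rw [hmove B hBpos, hBB]
    exact (hK₀inner φ ψ).symm
  have hrep1 : ∀ φ ψ : ↥D, h₁ φ ψ = (inner ℂ (A (Q ψ)) (A (Q φ)) : ℂ) := by
    intro φ ψ
    rw [hmove A hApos, hAA]
    have hs := hsum φ ψ
    have hsub : (inner ℂ ((1 - K₀) (Q ψ)) (Q φ) : ℂ)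
        = (inner ℂ (Q ψ) (Q φ) : ℂ) - (inner ℂ (K₀ (Q ψ)) (Q φ) : ℂ) := by
      rw [ContinuousLinearMap.sub_apply, ContinuousLinearMap.one_apply, inner_sub_left]
    rw [hsub, hK₀inner φ ψ, ← hQ' φ ψ]
    linear_combination -hs
  refine ⟨K₀, posK₀, pos1K₀, ⟨A, B, hApos, hBpos, hAA, hBB, hrep1, hrep2⟩, ?_⟩
  intro hdQ K₀' pos' pos1' hex
  obtain ⟨A', B', hA'p, hB'p, hA'A, hB'B, hrep1', hrep2'⟩ := hex
  have hzero : ∀ u : K, (∀ φ : ↥D, (inner ℂ u (Q φ) : ℂ) = 0) → u = 0 := by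
    intro u hu
    have hcl : closure (Set.range fun φ : ↥D => Q φ) ⊆ {y : K | (inner ℂ u y : ℂ) = 0} := by
      apply closure_minimal
      · rintro y ⟨φ, rfl⟩; exact hu φ
      · exact isClosed_eq (continuous_const.inner continuous_id) continuous_const
    have hmem : u ∈ closure (Set.range fun φ : ↥D => Q φ) := by
      rw [hdQ.closure_eq]; trivial
    exact inner_self_eq_zero.mp (hcl hmem)
  have heq : ∀ ψ : ↥D, K₀' (Q ψ) = K₀ (Q ψ) := by
    intro ψ
    have hz : ∀ φ : ↥D, (inner ℂ (K₀' (Q ψ) - K₀ (Q ψ)) (Q φ) : ℂ) = 0 := by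
      intro φ
      have h1' : (inner ℂ (K₀' (Q ψ)) (Q φ) : ℂ) = h₂ φ ψ := by
        rw [← hB'B, ← hmove B' hB'p]
        exact (hrep2' φ ψ).symm
      rw [inner_sub_left, hK₀inner φ ψ, h1', sub_self]
    exact sub_eq_zero.mp (hzero _ hz)
  have hcoe : (⇑K₀' : K → K) = ⇑K₀ := by
    apply Continuous.ext_on hdQ K₀'.continuous K₀.continuous
    rintro y ⟨ψ, rfl⟩
    exact heq ψ
  ext x
  exact congrFun hcoe x
end
end

section
/- Let h be a nonnegative form with minimal representing map Q (ran Q dense in K), and let K₀ ∈ B(K) be a nonnegative contraction generating the sum decomposition h = h₁ + h₂ as h₁ = ‖(I−K₀)^{1/2}Q·‖², h₂ = ‖K₀^{1/2}Q·‖². Then the column representation φ ↦ ((I−K₀)^{1/2}Qφ, K₀^{1/2}Qφ) ∈ K₁ ⊕ K₂, where K₁ = closure of ran(I−K₀) and K₂ = closure of ran K₀, is a representing map for h, and it is minimal (dense range in K₁ ⊕ K₂) if and only if K₀ is an orthogonal projection. -/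
open Filter Topology
open scoped ComplexOrder

noncomputable section

variable {H K K' : Type*}

section MyHelpers
variable {K : Type*} [NormedAddCommGroup K] [InnerProductSpace ℂ K] [CompleteSpace K]

private lemma sa_inner' (A : K →L[ℂ] K) (hA : IsSelfAdjoint A) (x y : K) :
    (inner ℂ (A x) y : ℂ) = inner ℂ x (A y) := by
  conv_lhs => rw [← hA.adjoint_eq]
  exact ContinuousLinearMap.adjoint_inner_left A y x

private lemma mem_closure_range_sq' (A C : K →L[ℂ] K) (hA : IsSelfAdjoint A)
    (hAC : A * A = C) (k : K) : A k ∈ closure (Set.range fun x : K => C x) := by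
  have hset : (Set.range fun x : K => C x) = ↑(LinearMap.range (C : K →ₗ[ℂ] K)) := by
    rw [LinearMap.coe_range]; rfl
  rw [hset, ← Submodule.topologicalClosure_coe, ← Submodule.orthogonal_orthogonal_eq_closure]
  rw [SetLike.mem_coe, Submodule.mem_orthogonal]
  intro z hz
  have hCz : (inner ℂ (C z) z : ℂ) = 0 :=
    (Submodule.mem_orthogonal _ z).mp hz (C z) (LinearMap.mem_range_self _ z)
  have hAz : A z = 0 := by
    have h0 : (inner ℂ (A z) (A z) : ℂ) = 0 := by
      rw [← sa_inner' A hA (A z) z, show A (A z) = C z from by rw [← hAC]; rfl]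
      exact hCz
    exact inner_self_eq_zero.mp h0
  rw [← sa_inner' A hA z k, hAz, inner_zero_left]

end MyHelpers

/-- the column map `φ ↦ ((I-K₀)^{1/2}Qφ, K₀^{1/2}Qφ)` represents `h` in
`K₁ ⊕ K₂` (`K₁ = clos ran(I-K₀)`, `K₂ = clos ran K₀`) and it is minimal iff `K₀` is an
orthogonal projection. -/
theorem statement13 [NormedAddCommGroup H] [InnerProductSpace ℂ H]
    [NormedAddCommGroup K] [InnerProductSpace ℂ K] [CompleteSpace K]
    {D : Submodule ℂ H} (h : Form D)
    (Q : ↥D →ₗ[ℂ] K) (hQ : IsRepMap h 0 Q)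
    (hmin : Dense (Set.range fun φ : ↥D => Q φ))
    (K₀ : K →L[ℂ] K) (hK₀ : K₀.IsPositive) (hK₀' : (1 - K₀).IsPositive)
    (A B : K →L[ℂ] K) (hA : A.IsPositive) (hB : B.IsPositive)
    (hA2 : A * A = 1 - K₀) (hB2 : B * B = K₀) :
    (∀ φ ψ : ↥D, h φ ψ =
      (inner ℂ (A (Q ψ)) (A (Q φ)) : ℂ) + (inner ℂ (B (Q ψ)) (B (Q φ)) : ℂ)) ∧
    ((closure (Set.range fun φ : ↥D => ((A (Q φ), B (Q φ)) : K × K)) =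
        Set.prod (closure (Set.range fun k : K => (1 - K₀) k))
          (closure (Set.range fun k : K => K₀ k))) ↔
      K₀ * K₀ = K₀) := by
  have hAB' : ∀ u v : K, (inner ℂ (A u) (A v) : ℂ) = inner ℂ u ((1 - K₀) v) := by
    intro u v
    rw [sa_inner' A hA.isSelfAdjoint, show A (A v) = (1 - K₀) v from by rw [← hA2]; rfl]
  have hBB' : ∀ u v : K, (inner ℂ (B u) (B v) : ℂ) = inner ℂ u (K₀ v) := by
    intro u v
    rw [sa_inner' B hB.isSelfAdjoint, show B (B v) = K₀ v from by rw [← hB2]; rfl]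
  constructor
  · intro φ ψ
    have h0 := hQ φ ψ
    simp only [Complex.ofReal_zero, zero_mul, sub_zero] at h0
    rw [h0, hAB', hBB', ← inner_add_right]
    congr 1
    simp [ContinuousLinearMap.sub_apply]
  · set W : K →L[ℂ] (K × K) := A.prod B with hWdef
    have hWapp : ∀ k : K, W k = (A k, B k) := fun k => rfl
    have hnorm : ∀ k : K, ‖A k‖ ^ 2 + ‖B k‖ ^ 2 = ‖k‖ ^ 2 := by
      intro k
      have hc : (inner ℂ (A k) (A k) : ℂ) + inner ℂ (B k) (B k) = inner ℂ k k := by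
        rw [hAB', hBB', ← inner_add_right]
        congr 1
        simp [ContinuousLinearMap.sub_apply]
      have h3 := congrArg (RCLike.re (K := ℂ)) hc
      rw [map_add, inner_self_eq_norm_sq, inner_self_eq_norm_sq, inner_self_eq_norm_sq] at h3
      exact h3
    have hclosed : IsClosed (Set.range W) := by
      have hanti : AntilipschitzWith 2 W := by
        apply W.antilipschitz_of_bound (K := 2)
        intro k
        have h1 : ‖A k‖ ≤ ‖W k‖ := by
          rw [hWapp, Prod.norm_def]; exact le_max_left _ _
        have h2 : ‖B k‖ ≤ ‖W k‖ := by
          rw [hWapp, Prod.norm_def]; exact le_max_right _ _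
        have h3 := hnorm k
        have hk0 : (0:ℝ) ≤ ‖k‖ := norm_nonneg _
        have hw0 : (0:ℝ) ≤ ‖W k‖ := norm_nonneg _
        have hA0 : (0:ℝ) ≤ ‖A k‖ := norm_nonneg _
        have hB0 : (0:ℝ) ≤ ‖B k‖ := norm_nonneg _
        have h4 : ‖k‖ ^ 2 ≤ (2 * ‖W k‖) ^ 2 := by
          nlinarith [mul_le_mul h1 h1 hA0 hw0, mul_le_mul h2 h2 hB0 hw0]
        have h5 : ‖k‖ ≤ 2 * ‖W k‖ :=
          (pow_le_pow_iff_left₀ hk0 (by positivity) two_ne_zero).mp h4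
        simpa [NNReal.coe_ofNat] using h5
      exact hanti.isClosed_range W.uniformContinuous
    have hWQ : closure (Set.range fun φ : ↥D => ((A (Q φ), B (Q φ)) : K × K))
        = Set.range W := by
      have himg : (Set.range fun φ : ↥D => ((A (Q φ), B (Q φ)) : K × K))
          = W '' (Set.range fun φ : ↥D => Q φ) := by
        ext p
        constructor
        · rintro ⟨φ, rfl⟩; exact ⟨Q φ, ⟨φ, rfl⟩, rfl⟩
        · rintro ⟨x, ⟨φ, rfl⟩, rfl⟩; exact ⟨φ, rfl⟩
      apply Set.Subset.antisymm
      · apply closure_minimal _ hclosed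
        rintro p ⟨φ, rfl⟩
        exact ⟨Q φ, rfl⟩
      · rintro p ⟨k, rfl⟩
        rw [himg]
        exact image_closure_subset_closure_image W.continuous ⟨k, hmin k, rfl⟩
    rw [hWQ]
    constructor
    · intro heq
      ext x
      simp only [ContinuousLinearMap.mul_apply]
      have h1 : ((1 - K₀) x, (0 : K)) ∈
          Set.prod (closure (Set.range fun k : K => (1 - K₀) k))
            (closure (Set.range fun k : K => K₀ k)) := by
        exact ⟨subset_closure ⟨x, rfl⟩, subset_closure ⟨0, by simp⟩⟩
      rw [← heq] at h1
      obtain ⟨k, hk⟩ := h1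
      have hAk : A k = (1 - K₀) x := congrArg Prod.fst hk
      have hBk : B k = 0 := congrArg Prod.snd hk
      have hcomm : K₀ * A = A * K₀ := by
        have hK : K₀ = 1 - A * A := by rw [hA2, sub_sub_cancel]
        rw [hK]; noncomm_ring
      have hz : K₀ ((1 - K₀) x) = 0 := by
        have : K₀ ((1 - K₀) x) = A (K₀ k) := by
          rw [← hAk, ← ContinuousLinearMap.mul_apply, hcomm]; rfl
        rw [this, show K₀ k = B (B k) from by rw [← hB2]; rfl, hBk]
        simp
      have hz' : K₀ x - K₀ (K₀ x) = 0 := by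
        have e : (1 - K₀) x = x - K₀ x := by simp [ContinuousLinearMap.sub_apply]
        rw [e, map_sub] at hz
        exact hz
      have := sub_eq_zero.mp hz'
      exact this.symm
    · intro hproj
      have hAB : ∀ x : K, A (B x) = 0 := by
        intro x
        apply (inner_self_eq_zero (𝕜 := ℂ)).mp
        rw [hAB']
        have e : (1 - K₀) (B x) = B x - K₀ (B x) := by simp [ContinuousLinearMap.sub_apply]
        rw [e, inner_sub_right, hBB']
        have hc : K₀ (B x) = B (K₀ x) := by
          have h' : K₀ * B = B * K₀ := by rw [← hB2]; exact mul_assoc B B B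
          rw [← ContinuousLinearMap.mul_apply, h']; rfl
        rw [hc, hBB']
        rw [show K₀ (K₀ x) = (K₀ * K₀) x from rfl, hproj]
        ring
      have hABop : A * B = 0 := by
        ext x; simpa using hAB x
      have hBAop : B * A = 0 := by
        have hst := congrArg star hABop
        rwa [star_mul, hA.isSelfAdjoint.star_eq, hB.isSelfAdjoint.star_eq, star_zero] at hst
      apply Set.Subset.antisymm
      · rintro p ⟨k, rfl⟩
        rw [hWapp]
        exact ⟨mem_closure_range_sq' A (1 - K₀) hA.isSelfAdjoint hA2 k,
          mem_closure_range_sq' B K₀ hB.isSelfAdjoint hB2 k⟩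
      · have hsub : (Set.range fun k : K => (1 - K₀) k) ×ˢ
            (Set.range fun k : K => K₀ k) ⊆ Set.range W := by
          rintro ⟨p1, p2⟩ ⟨⟨u, hu⟩, ⟨v, hv⟩⟩
          refine ⟨A u + B v, ?_⟩
          rw [hWapp]
          have e1 : A (A u + B v) = (1 - K₀) u := by
            rw [map_add, hAB v, add_zero, show A (A u) = (1 - K₀) u from by rw [← hA2]; rfl]
          have e2 : B (A u + B v) = K₀ v := by
            rw [map_add, show B (A u) = (B * A) u from rfl, hBAop,
              show B (B v) = K₀ v from by rw [← hB2]; rfl]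
            simp
          simp only [e1, e2]
          exact Prod.ext (by simpa using hu) (by simpa using hv)
        have hc2 := closure_minimal hsub hclosed
        rw [closure_prod_eq] at hc2
        exact hc2
end
end

section
/- Let h₁, h₂ be nonnegative forms on a common domain, let Q be a minimal representing map for h = h₁ + h₂, and let K₀ be the nonnegative contraction with h₁ = ‖(I−K₀)^{1/2}Q·‖², h₂ = ‖K₀^{1/2}Q·‖². Then the parallel sum satisfies (h₁ : h₂)[φ,ψ] = ⟨((I−K₀):K₀) Qφ, Qψ⟩ for all φ, ψ in the common domain, where (I−K₀):K₀ denotes the parallel sum of bounded nonnegative operators. -/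
open Filter Topology
open scoped ComplexOrder

noncomputable section

variable {H K K' : Type*}

/-- the parallel sum of the summands `h₁, h₂` is represented by the
parallel sum of the operators `I - K₀` and `K₀` (both parallel sums given as infima). -/
theorem statement14 [NormedAddCommGroup H] [InnerProductSpace ℂ H]
    [NormedAddCommGroup K] [InnerProductSpace ℂ K] [CompleteSpace K]
    {D : Submodule ℂ H} (h h₁ h₂ : Form D)
    (hsum : ∀ φ ψ : ↥D, h φ ψ = h₁ φ ψ + h₂ φ ψ)
    (Q : ↥D →ₗ[ℂ] K) (hQ : IsRepMap h 0 Q)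
    (hmin : Dense (Set.range fun φ : ↥D => Q φ))
    (K₀ : K →L[ℂ] K) (hK₀ : K₀.IsPositive) (hK₀' : (1 - K₀).IsPositive)
    (A B : K →L[ℂ] K) (hA : A.IsPositive) (hB : B.IsPositive)
    (hA2 : A * A = 1 - K₀) (hB2 : B * B = K₀)
    (hh₁ : ∀ φ ψ : ↥D, h₁ φ ψ = (inner ℂ (A (Q ψ)) (A (Q φ)) : ℂ))
    (hh₂ : ∀ φ ψ : ↥D, h₂ φ ψ = (inner ℂ (B (Q ψ)) (B (Q φ)) : ℂ))
    (C : K →L[ℂ] K)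
    (hC : ∀ k : K, IsGLB {r : ℝ | ∃ g : K,
        r = (inner ℂ (g + k) ((1 - K₀) (g + k)) : ℂ).re + (inner ℂ g (K₀ g) : ℂ).re}
      ((inner ℂ k (C k) : ℂ).re)) :
    ∀ φ : ↥D, IsGLB {r : ℝ | ∃ χ : ↥D,
        r = (h₁ (χ + φ) (χ + φ)).re + (h₂ χ χ).re}
      ((inner ℂ (Q φ) (C (Q φ)) : ℂ).re) := by
  intro φ
  set k := Q φ with hk
  -- abbreviation for the target quadratic function
  set f : K → ℝ := fun g =>
    (inner ℂ (g + k) ((1 - K₀) (g + k)) : ℂ).re + (inner ℂ g (K₀ g) : ℂ).re with hf_def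
  have hself : ∀ (T S : K →L[ℂ] K), T.IsPositive → T * T = S →
      ∀ u : K, (inner ℂ (T u) (T u) : ℂ) = inner ℂ u (S u) := by
    intro T S hT hTS u
    have hadj : ContinuousLinearMap.adjoint T = T := hT.isSelfAdjoint.adjoint_eq
    calc (inner ℂ (T u) (T u) : ℂ)
        = inner ℂ u (ContinuousLinearMap.adjoint T (T u)) := by
          rw [ContinuousLinearMap.adjoint_inner_right]
      _ = inner ℂ u (S u) := by rw [hadj, ← ContinuousLinearMap.mul_apply, hTS]
  have hval : ∀ χ : ↥D,
      (h₁ (χ + φ) (χ + φ)).re + (h₂ χ χ).re = f (Q χ) := by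
    intro χ
    have e1 : (h₁ (χ + φ) (χ + φ)) = inner ℂ (Q χ + k) ((1 - K₀) (Q χ + k)) := by
      rw [hh₁, hself A (1 - K₀) hA hA2, hk, ← map_add]
    have e2 : (h₂ χ χ) = inner ℂ (Q χ) (K₀ (Q χ)) := by
      rw [hh₂, hself B K₀ hB hB2]
    rw [e1, e2]
  have hfcont : Continuous f := by
    apply Continuous.add
    · exact Complex.continuous_re.comp
        (Continuous.inner (continuous_id.add continuous_const)
          ((1 - K₀).continuous.comp (continuous_id.add continuous_const)))
    · exact Complex.continuous_re.comp (Continuous.inner continuous_id K₀.continuous)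
  have hCk := hC k
  constructor
  · intro r hr
    obtain ⟨χ, rfl⟩ := hr
    rw [hval χ]
    exact hCk.1 ⟨Q χ, rfl⟩
  · intro b hb
    apply hCk.2
    rintro r ⟨g, rfl⟩
    have hsub : (Set.range fun φ : ↥D => Q φ) ⊆ {g : K | b ≤ f g} := by
      rintro _ ⟨χ, rfl⟩
      have := hb ⟨χ, rfl⟩
      rw [hval χ] at this
      exact this
    have hcl : closure (Set.range fun φ : ↥D => Q φ) ⊆ {g : K | b ≤ f g} :=
      (IsClosed.closure_subset_iff (isClosed_le continuous_const hfcont)).mpr hsub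
    have : g ∈ {g : K | b ≤ f g} := hcl (hmin.closure_eq ▸ Set.mem_univ g)
    exact this
end
end

section
/- In the setting above (minimal representing map Q for h = h₁ + h₂ with parameter contraction K₀), the forms h₁ and h₂ are mutually singular (i.e., their parallel sum h₁ : h₂ is the zero form) if and only if K₀ is an orthogonal projection. -/
open Filter Topology
open scoped ComplexOrder

noncomputable section

variable {H K K' : Type*}

/-- the summands `h₁, h₂` are mutually singular (their parallel sum
vanishes) iff the parameter contraction `K₀` is an orthogonal projection. -/
theorem statement15 [NormedAddCommGroup H] [InnerProductSpace ℂ H]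
    [NormedAddCommGroup K] [InnerProductSpace ℂ K] [CompleteSpace K]
    {D : Submodule ℂ H} (h h₁ h₂ : Form D)
    (hsum : ∀ φ ψ : ↥D, h φ ψ = h₁ φ ψ + h₂ φ ψ)
    (Q : ↥D →ₗ[ℂ] K) (hQ : IsRepMap h 0 Q)
    (hmin : Dense (Set.range fun φ : ↥D => Q φ))
    (K₀ : K →L[ℂ] K) (hK₀ : K₀.IsPositive) (hK₀' : (1 - K₀).IsPositive)
    (A B : K →L[ℂ] K) (hA : A.IsPositive) (hB : B.IsPositive)
    (hA2 : A * A = 1 - K₀) (hB2 : B * B = K₀)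
    (hh₁ : ∀ φ ψ : ↥D, h₁ φ ψ = (inner ℂ (A (Q ψ)) (A (Q φ)) : ℂ))
    (hh₂ : ∀ φ ψ : ↥D, h₂ φ ψ = (inner ℂ (B (Q ψ)) (B (Q φ)) : ℂ)) :
    (∀ φ : ↥D, IsGLB {r : ℝ | ∃ χ : ↥D,
        r = (h₁ (χ + φ) (χ + φ)).re + (h₂ χ χ).re} 0) ↔
      K₀ * K₀ = K₀ := by
  classical
  set T : K →L[ℂ] K := 1 - K₀ with hTdef
  have symA : ∀ x y : K, (inner ℂ (A x) y : ℂ) = inner ℂ x (A y) := fun x y =>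
    hA.1 x y
  have symB : ∀ x y : K, (inner ℂ (B x) y : ℂ) = inner ℂ x (B y) := fun x y =>
    hB.1 x y
  have symT : ∀ x y : K, (inner ℂ (T x) y : ℂ) = inner ℂ x (T y) := by
    intro x y
    simp only [hTdef, ContinuousLinearMap.sub_apply, ContinuousLinearMap.one_apply,
      inner_sub_left, inner_sub_right, (fun x y => hK₀.1 x y : ∀ x y : K, inner ℂ (K₀ x) y = inner ℂ x (K₀ y))]
    exact congrArg _ (hK₀.1 x y)
  have symK : ∀ x y : K, (inner ℂ (K₀ x) y : ℂ) = inner ℂ x (K₀ y) := fun x y =>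
    hK₀.1 x y
  have qA : ∀ z : K, (inner ℂ (A z) (A z) : ℂ) = inner ℂ z (T z) := by
    intro z
    rw [symA]
    congr 1
    have : A (A z) = (A * A) z := rfl
    rw [this, hA2]
  have qB : ∀ z : K, (inner ℂ (B z) (B z) : ℂ) = inner ℂ z (K₀ z) := by
    intro z
    rw [symB]
    congr 1
    have : B (B z) = (B * B) z := rfl
    rw [this, hB2]
  -- operator identity  T*T + K₀*T*K₀ + T*K₀*T = T
  have opid : ∀ z : K, T (T z) + (K₀ (T (K₀ z)) + T (K₀ (T z))) = T z := by
    intro z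
    have hop : T * T + (K₀ * T * K₀ + T * K₀ * T) = T := by
      rw [hTdef]; noncomm_ring
    have := congrArg (fun (L : K →L[ℂ] K) => L z) hop
    simpa [ContinuousLinearMap.add_apply, ContinuousLinearMap.mul_apply] using this
  -- key complex identity
  have keyC : ∀ x y : K, (inner ℂ (A (x + y)) (A (x + y)) : ℂ) + inner ℂ (B x) (B x)
      = inner ℂ (x + T y) (x + T y)
        + ((inner ℂ (A (K₀ y)) (A (K₀ y)) : ℂ) + inner ℂ (B (T y)) (B (T y))) := by
    intro x y
    rw [qA, qB, qA, qB]
    have e1 : (inner ℂ y (T x) : ℂ) = inner ℂ (T y) x := (symT y x).symm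
    have e2 : (inner ℂ x (T x) : ℂ) + inner ℂ x (K₀ x) = inner ℂ x x := by
      rw [← inner_add_right]
      congr 1
      simp [hTdef, ContinuousLinearMap.sub_apply]
    have e3 : (inner ℂ (T y) (T y) : ℂ) + ((inner ℂ (K₀ y) (T (K₀ y)) : ℂ)
        + inner ℂ (T y) (K₀ (T y))) = inner ℂ y (T y) := by
      rw [symT, symK, symT, ← inner_add_right, ← inner_add_right]
      congr 1
      exact opid y
    calc (inner ℂ (x + y) (T (x + y)) : ℂ) + inner ℂ x (K₀ x)
        = ((inner ℂ x (T x) : ℂ) + inner ℂ x (K₀ x)) + inner ℂ x (T y)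
            + inner ℂ y (T x) + inner ℂ y (T y) := by
          simp only [map_add, inner_add_left, inner_add_right]; ring
      _ = (inner ℂ x x : ℂ) + inner ℂ x (T y) + inner ℂ (T y) x + inner ℂ y (T y) := by
          rw [e2, e1]
      _ = (inner ℂ x x : ℂ) + inner ℂ x (T y) + inner ℂ (T y) x + ((inner ℂ (T y) (T y) : ℂ)
            + ((inner ℂ (K₀ y) (T (K₀ y)) : ℂ) + inner ℂ (T y) (K₀ (T y)))) := by rw [e3]
      _ = _ := by
          rw [inner_add_add_self]; ring
  have reNorm : ∀ w : K, (inner ℂ w w : ℂ).re = ‖w‖ ^ 2 := by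
    intro w
    rw [@inner_self_eq_norm_sq_to_K ℂ]; norm_cast
  -- real (norm) version
  have key : ∀ x y : K, ‖A (x + y)‖ ^ 2 + ‖B x‖ ^ 2
      = ‖x + T y‖ ^ 2 + (‖A (K₀ y)‖ ^ 2 + ‖B (T y)‖ ^ 2) := by
    intro x y
    have hc := congrArg Complex.re (keyC x y)
    simp only [Complex.add_re, reNorm] at hc
    exact hc
  -- description of the set elements
  have hElt : ∀ φ χ : ↥D, (h₁ (χ + φ) (χ + φ)).re + (h₂ χ χ).re
      = ‖Q χ + T (Q φ)‖ ^ 2 + (‖A (K₀ (Q φ))‖ ^ 2 + ‖B (T (Q φ))‖ ^ 2) := by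
    intro φ χ
    rw [hh₁, hh₂]
    have h1 : ((inner ℂ (A (Q (χ + φ))) (A (Q (χ + φ))) : ℂ)).re = ‖A (Q χ + Q φ)‖ ^ 2 := by
      rw [map_add]; exact reNorm _
    have h2 : ((inner ℂ (B (Q χ)) (B (Q χ)) : ℂ)).re = ‖B (Q χ)‖ ^ 2 := reNorm _
    rw [h1, h2, key]
  constructor
  · -- singular ⇒ projection
    intro hglb
    have hzero : ∀ φ : ↥D, (K₀ * K₀) (Q φ) = K₀ (Q φ) := by
      intro φ
      set y := Q φ with hy
      set g : ℝ := ‖A (K₀ y)‖ ^ 2 + ‖B (T y)‖ ^ 2 with hg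
      have hlb : g ∈ lowerBounds {r : ℝ | ∃ χ : ↥D,
          r = (h₁ (χ + φ) (χ + φ)).re + (h₂ χ χ).re} := by
        rintro r ⟨χ, rfl⟩
        rw [hElt φ χ]
        nlinarith [sq_nonneg ‖Q χ + T y‖]
      have hgle : g ≤ 0 := (hglb φ).2 hlb
      have hgnn : 0 ≤ g := by positivity
      have hAz : A (K₀ y) = 0 := by
        have : ‖A (K₀ y)‖ ^ 2 = 0 := by nlinarith [sq_nonneg ‖B (T y)‖, sq_nonneg ‖A (K₀ y)‖]
        simpa [pow_eq_zero_iff, norm_eq_zero] using this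
      have hTK : T (K₀ y) = 0 := by
        have : T (K₀ y) = A (A (K₀ y)) := by
          have : A (A (K₀ y)) = (A * A) (K₀ y) := rfl
          rw [this, hA2]
        rw [this, hAz, map_zero]
      have := hTK
      simp only [hTdef, ContinuousLinearMap.sub_apply, ContinuousLinearMap.one_apply,
        sub_eq_zero] at this
      simpa [ContinuousLinearMap.mul_apply] using this.symm
    have : (fun z : K => (K₀ * K₀) z) = fun z : K => K₀ z := by
      refine Continuous.ext_on hmin (K₀ * K₀).continuous K₀.continuous ?_
      rintro z ⟨φ, rfl⟩
      exact hzero φ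
    ext z
    exact congrFun this z
  · -- projection ⇒ singular
    intro hproj φ
    have hTK : ∀ z : K, T (K₀ z) = 0 := by
      intro z
      have := congrArg (fun (L : K →L[ℂ] K) => L z) (sub_eq_zero.mpr hproj)
      simp only [ContinuousLinearMap.sub_apply, ContinuousLinearMap.mul_apply,
        ContinuousLinearMap.zero_apply] at this
      simp only [hTdef, ContinuousLinearMap.sub_apply, ContinuousLinearMap.one_apply,
        sub_eq_zero]
      exact (sub_eq_zero.mp this).symm
    have hKT : ∀ z : K, K₀ (T z) = 0 := by
      intro z
      have := congrArg (fun (L : K →L[ℂ] K) => L z) (sub_eq_zero.mpr hproj)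
      simp only [ContinuousLinearMap.sub_apply, ContinuousLinearMap.mul_apply,
        ContinuousLinearMap.zero_apply] at this
      simp only [hTdef, ContinuousLinearMap.coe_sub', Pi.sub_apply, map_sub,
        ContinuousLinearMap.one_apply, sub_eq_zero]
      exact (sub_eq_zero.mp this).symm
    set y := Q φ with hy
    have hAK : ‖A (K₀ y)‖ ^ 2 = 0 := by
      have : (inner ℂ (A (K₀ y)) (A (K₀ y)) : ℂ) = 0 := by
        rw [qA, hTK, inner_zero_right]
      have := congrArg Complex.re this
      rw [reNorm] at this; simpa using this
    have hBT : ‖B (T y)‖ ^ 2 = 0 := by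
      have : (inner ℂ (B (T y)) (B (T y)) : ℂ) = 0 := by
        rw [qB, hKT, inner_zero_right]
      have := congrArg Complex.re this
      rw [reNorm] at this; simpa using this
    have hElt' : ∀ χ : ↥D, (h₁ (χ + φ) (χ + φ)).re + (h₂ χ χ).re
        = ‖Q χ + T y‖ ^ 2 := by
      intro χ
      rw [hElt φ χ, ← hy, hAK, hBT]
      ring
    constructor
    · rintro r ⟨χ, rfl⟩
      rw [hElt' χ]
      positivity
    · intro b hb
      by_contra hb0
      push_neg at hb0
      have hbpos : 0 < b := hb0
      have hmem : -T y ∈ closure (Set.range fun φ : ↥D => Q φ) := hmin _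
      rw [Metric.mem_closure_iff] at hmem
      obtain ⟨z, ⟨χ, rfl⟩, hz⟩ := hmem (Real.sqrt b) (Real.sqrt_pos.mpr hbpos)
      have hdist : ‖Q χ + T y‖ < Real.sqrt b := by
        rw [dist_eq_norm] at hz
        calc ‖Q χ + T y‖ = ‖-T y - Q χ‖ := by rw [← norm_neg]; congr 1; abel
          _ < Real.sqrt b := hz
      have hr : ‖Q χ + T y‖ ^ 2 < b := by
        have := Real.sq_sqrt hbpos.le
        nlinarith [norm_nonneg (Q χ + T y), Real.sqrt_nonneg b]
      have := hb ⟨χ, (hElt' χ).symm⟩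
      linarith
end
end

section
/- Let t be a semibounded form on H, c ≤ m(t), and Q_c a representing map for t − c. Define the symmetric relation S_t = Q_c*Q_c + c in H. Then S_t is bounded below by m(t), dom S_t ⊂ dom t, and for each (φ, φ') ∈ S_t one has t[φ,ψ] = ⟨φ',ψ⟩ for all ψ ∈ dom t. Moreover, if H₀ is any symmetric relation with dom H₀ ⊂ dom t such that every (φ,φ') ∈ H₀ satisfies t[φ,ψ] = ⟨φ',ψ⟩ for all ψ ∈ dom t, then H₀ ⊂ S_t. -/
open Filter Topology
open scoped ComplexOrder

noncomputable section

variable {H K K' : Type*}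

/-- the symmetric relation `S_t = Q*Q + c` is bounded below by `m(t)`,
its domain lies in `dom t`, its elements represent `t`, and it is maximal among
symmetric relations with this representing property. -/
theorem statement16 [NormedAddCommGroup H] [InnerProductSpace ℂ H] [CompleteSpace H]
    [NormedAddCommGroup K] [InnerProductSpace ℂ K] [CompleteSpace K]
    {D : Submodule ℂ H} (t : Form D) (m c : ℝ)
    (hm : IsGLB (rayleighSet t) m) (hc : c ≤ m)
    (Q : ↥D →ₗ[ℂ] K) (hQ : IsRepMap t c Q) :
    IsSymmRel (StRel Q c) ∧
      (∀ p ∈ StRel Q c, (↑(m * ‖p.1‖ ^ 2) : ℂ) ≤ (inner ℂ p.1 p.2 : ℂ)) ∧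
      (∀ p ∈ StRel Q c, p.1 ∈ D) ∧
      (∀ p ∈ StRel Q c, ∃ h : p.1 ∈ D,
        ∀ ψ : ↥D, t ⟨p.1, h⟩ ψ = (inner ℂ (ψ : H) p.2 : ℂ)) ∧
      (∀ R : Set (H × H), IsSymmRel R →
        (∀ p ∈ R, ∃ h : p.1 ∈ D,
          ∀ ψ : ↥D, t ⟨p.1, h⟩ ψ = (inner ℂ (ψ : H) p.2 : ℂ)) →
        R ⊆ StRel Q c) := by
  classical
  -- the key representing property of elements of `StRel Q c`
  have key : ∀ p ∈ StRel Q c, ∃ h : p.1 ∈ D,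
      ∀ ψ : ↥D, t ⟨p.1, h⟩ ψ = (inner ℂ (ψ : H) p.2 : ℂ) := by
    rintro p ⟨h, hp⟩
    refine ⟨h, fun ψ => ?_⟩
    have h1 := hQ ⟨p.1, h⟩ ψ
    have h2 := hp ψ
    rw [inner_sub_right, inner_smul_right] at h2
    rw [h2] at h1
    have : ((⟨p.1, h⟩ : ↥D) : H) = p.1 := rfl
    rw [this] at h1
    linear_combination h1
  -- `t` is Hermitian
  have herm : ∀ φ ψ : ↥D, t φ ψ = starRingEnd ℂ (t ψ φ) := by
    intro φ ψ
    have h1 := hQ φ ψ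
    have h2 := hQ ψ φ
    have h3 : starRingEnd ℂ (t ψ φ - (c : ℂ) * (inner ℂ (φ : H) (ψ : H) : ℂ))
        = starRingEnd ℂ (inner ℂ (Q φ) (Q ψ) : ℂ) := by rw [h2]
    rw [map_sub, map_mul, inner_conj_symm, inner_conj_symm] at h3
    have hcr : starRingEnd ℂ (c : ℂ) = (c : ℂ) := Complex.conj_ofReal c
    rw [hcr] at h3
    linear_combination h1 - h3
  refine ⟨?_, ?_, ?_, key, ?_⟩
  · -- symmetry
    rintro p hp q hq
    obtain ⟨hp1, hpt⟩ := key p hp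
    obtain ⟨hq1, hqt⟩ := key q hq
    have e1 : t ⟨p.1, hp1⟩ ⟨q.1, hq1⟩ = (inner ℂ q.1 p.2 : ℂ) := hpt ⟨q.1, hq1⟩
    have e2 : t ⟨q.1, hq1⟩ ⟨p.1, hp1⟩ = (inner ℂ p.1 q.2 : ℂ) := hqt ⟨p.1, hp1⟩
    have := herm ⟨p.1, hp1⟩ ⟨q.1, hq1⟩
    rw [e1, e2] at this
    rw [this, inner_conj_symm]
  · -- lower bound
    rintro p hp
    obtain ⟨h, hpt⟩ := key p hp
    set φ : ↥D := ⟨p.1, h⟩ with hφ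
    have e1 : t φ φ = (inner ℂ p.1 p.2 : ℂ) := hpt φ
    have e2 := hQ φ φ
    have hφH : (φ : H) = p.1 := rfl
    -- `t φ φ` is real: equals ‖Qφ‖² + c‖φ‖²
    have hreal : t φ φ = ((‖Q φ‖ ^ 2 + c * ‖p.1‖ ^ 2 : ℝ) : ℂ) := by
      rw [hφH] at e2
      have : (inner ℂ (Q φ) (Q φ) : ℂ) = ((‖Q φ‖ : ℂ)) ^ 2 := inner_self_eq_norm_sq_to_K (Q φ)
      rw [this] at e2
      have hin : (inner ℂ p.1 p.1 : ℂ) = ((‖p.1‖ : ℂ)) ^ 2 := inner_self_eq_norm_sq_to_K p.1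
      push_cast
      rw [hin] at e2
      linear_combination e2
    rw [← e1, hreal]
    by_cases hz : p.1 = 0
    · simp [hz]
    · have hmem : (t φ φ).re / ‖p.1‖ ^ 2 ∈ rayleighSet t := ⟨φ, by rw [hφH]; exact hz, rfl⟩
      have hmle : m ≤ (t φ φ).re / ‖p.1‖ ^ 2 := hm.1 hmem
      have hnorm : (0 : ℝ) < ‖p.1‖ ^ 2 := pow_pos (norm_pos_iff.mpr hz) 2
      have hre : (t φ φ).re = ‖Q φ‖ ^ 2 + c * ‖p.1‖ ^ 2 := by rw [hreal, Complex.ofReal_re]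
      have : m * ‖p.1‖ ^ 2 ≤ ‖Q φ‖ ^ 2 + c * ‖p.1‖ ^ 2 := by
        rw [← hre]
        calc m * ‖p.1‖ ^ 2 ≤ ((t φ φ).re / ‖p.1‖ ^ 2) * ‖p.1‖ ^ 2 := by
              exact mul_le_mul_of_nonneg_right hmle hnorm.le
          _ = (t φ φ).re := div_mul_cancel₀ _ (ne_of_gt hnorm)
      exact_mod_cast this
  · rintro p ⟨h, _⟩; exact h
  · -- maximality
    rintro R _ hRrep p hp
    obtain ⟨h, hpt⟩ := hRrep p hp
    refine ⟨h, fun ψ => ?_⟩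
    have h1 := hQ ⟨p.1, h⟩ ψ
    have : ((⟨p.1, h⟩ : ↥D) : H) = p.1 := rfl
    rw [this, hpt ψ, inner_sub_right, inner_smul_right] at *
    linear_combination -h1
end
end
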